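/- arXiv:1112.3696 — 2 statements merged into one kernel-verified Lean document; each statement's English description precedes it below -/
import Mathlib

section
/- Suppose the dynamical system (X,T,μ) satisfies the exponential concentration inequality with constant C > 0. Then there exists a constant D > 0 such that for every ε > 0, every n ≥ 1, and every t > 0, the observed empirical measure Ẽ_n = (1/n) Σ_{i=0}^{n−1} δ_{y_i} satisfies μ_n ⊗ P^n(κ(Ẽ_n, μ) > t + E_{μ_n ⊗ P^n}[κ(Ẽ_n, μ)]) ≤ exp(−t² n / (4 D (1 + ε²))). -/
open MeasureTheory Real

noncomputable section

/-- `K` is separately Lipschitz in each of its `n` variables, with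
`L j` a Lipschitz constant for the `j`-th variable. -/
def SepLip {E : Type*} [PseudoMetricSpace E] {n : ℕ}
    (K : (Fin n → E) → ℝ) (L : Fin n → ℝ) : Prop :=
  ∀ (x : Fin n → E) (j : Fin n) (y : E),
    |K x - K (Function.update x j y)| ≤ L j * dist (x j) y

/-- The Kantorovich distance between two measures:
`κ(ν₁, ν₂) = sup { ∫ g dν₁ - ∫ g dν₂ : g Lipschitz with constant at most 1 }`. -/
def kantorovich {α : Type*} [MeasurableSpace α] [PseudoMetricSpace α]
    (ν₁ ν₂ : Measure α) : ℝ :=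
  ⨆ g : {g : α → ℝ // LipschitzWith 1 g}, (∫ x, g.1 x ∂ν₁ - ∫ x, g.1 x ∂ν₂)

/-- The observed empirical measure `Ẽ_n = (1/n) ∑_{i<n} δ_{y_i}`,
where `y_i = T^i x + ε ξ_i`. -/
def obsEmpirical {d n : ℕ} (T : EuclideanSpace ℝ (Fin d) → EuclideanSpace ℝ (Fin d))
    (ε : ℝ) (p : EuclideanSpace ℝ (Fin d) × (Fin n → EuclideanSpace ℝ (Fin d))) :
    Measure (EuclideanSpace ℝ (Fin d)) :=
  (n : ENNReal)⁻¹ • ∑ i : Fin n, Measure.dirac (T^[(i : ℕ)] p.1 + ε • p.2 i)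

set_option linter.unusedSectionVars false
set_option maxHeartbeats 2000000

section AuxLemmas

section AuxGen

variable {Ω : Type*} [MeasurableSpace Ω] {Q : Measure Ω} [IsProbabilityMeasure Q]

lemma integrable_of_aebdd {f : Ω → ℝ} (hm : AEStronglyMeasurable f Q) {B : ℝ}
    (hb : ∀ᵐ ω ∂Q, |f ω| ≤ B) : Integrable f Q :=
  (integrable_const B).mono' hm (by simpa [Real.norm_eq_abs] using hb)

lemma ciSup_le_ciSup_add {ι : Sort*} [Nonempty ι] (a b : ι → ℝ)
    (hb : BddAbove (Set.range b)) {c : ℝ}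
    (h : ∀ i, a i ≤ b i + c) : (⨆ i, a i) ≤ (⨆ i, b i) + c :=
  ciSup_le fun i => (h i).trans (add_le_add_left (le_ciSup hb i) c)

lemma abs_ciSup_sub_ciSup_le {ι : Sort*} [Nonempty ι] (a b : ι → ℝ)
    (ha : BddAbove (Set.range a)) (hb : BddAbove (Set.range b)) {c : ℝ}
    (h : ∀ i, |a i - b i| ≤ c) : |(⨆ i, a i) - ⨆ i, b i| ≤ c := by
  rw [abs_le]
  constructor
  · have := ciSup_le_ciSup_add b a ha (c := c) fun i => by
      have := (abs_le.1 (h i)).1; linarith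
    linarith
  · have := ciSup_le_ciSup_add a b hb (c := c) fun i => by
      have := (abs_le.1 (h i)).2; linarith
    linarith

/-- One-step sub-Gaussian bound via the chord (Hoeffding-type) argument. -/
lemma mgf_step {V : Ω → ℝ} (hV : Integrable V Q) {m : ℝ} (hm : 0 ≤ m)
    (hbd : ∀ᵐ ω ∂Q, |V ω - ∫ x, V x ∂Q| ≤ m) :
    ∫ ω, Real.exp (V ω - ∫ x, V x ∂Q) ∂Q ≤ Real.exp (m ^ 2 / 2) := by
  set M := ∫ x, V x ∂Q with hM
  have hintW : Integrable (fun ω => V ω - M) Q := hV.sub (integrable_const M)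
  have hWzero : ∫ ω, (V ω - M) ∂Q = 0 := by
    rw [integral_sub hV (integrable_const M), integral_const]
    simp [hM]
  rcases eq_or_lt_of_le hm with hm0 | hmpos
  · have : ∀ᵐ ω ∂Q, Real.exp (V ω - M) = 1 := by
      filter_upwards [hbd] with ω hω
      have : V ω - M = 0 := by rw [← hm0] at hω; exact abs_eq_zero.1 (le_antisymm hω (abs_nonneg _))
      simp [this]
    rw [integral_congr_ae this]
    simp only [integral_const, probReal_univ, smul_eq_mul, one_mul]
    exact Real.one_le_exp (by positivity)
  · -- chord bound
    have key : ∀ᵐ ω ∂Q, Real.exp (V ω - M)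
        ≤ (Real.exp m + Real.exp (-m)) / 2
          + (V ω - M) * ((Real.exp m - Real.exp (-m)) / (2 * m)) := by
      filter_upwards [hbd] with ω hω
      set w := V ω - M with hw
      obtain ⟨h1, h2⟩ := abs_le.1 hω
      have ha : (0:ℝ) ≤ (m - w) / (2 * m) := div_nonneg (by linarith) (by linarith)
      have hb' : (0:ℝ) ≤ (m + w) / (2 * m) := div_nonneg (by linarith) (by linarith)
      have hab : (m - w) / (2 * m) + (m + w) / (2 * m) = 1 := by
        rw [← add_div]
        have : m - w + (m + w) = 2 * m := by ring
        rw [this, div_self (by positivity)]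
      have hcx := convexOn_exp.2 (Set.mem_univ (-m)) (Set.mem_univ m) ha hb' hab
      simp only [smul_eq_mul] at hcx
      have harg : (m - w) / (2 * m) * (-m) + (m + w) / (2 * m) * m = w := by
        field_simp
        ring
      have hrhs : (m - w) / (2 * m) * Real.exp (-m) + (m + w) / (2 * m) * Real.exp m
          = (Real.exp m + Real.exp (-m)) / 2 + w * ((Real.exp m - Real.exp (-m)) / (2 * m)) := by
        field_simp
        ring
      rw [harg, hrhs] at hcx
      exact hcx
    have hintL : Integrable (fun ω => Real.exp (V ω - M)) Q := by
      refine integrable_of_aebdd ((Real.continuous_exp.comp_aestronglyMeasurable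
        (hintW.aestronglyMeasurable))) (B := Real.exp m) ?_
      filter_upwards [hbd] with ω hω
      rw [abs_of_nonneg (Real.exp_pos _).le]
      exact Real.exp_le_exp.2 (abs_le.1 hω).2
    have hintR : Integrable (fun ω => (Real.exp m + Real.exp (-m)) / 2
        + (V ω - M) * ((Real.exp m - Real.exp (-m)) / (2 * m))) Q :=
      (integrable_const _).add (hintW.mul_const _)
    calc ∫ ω, Real.exp (V ω - M) ∂Q
        ≤ ∫ ω, ((Real.exp m + Real.exp (-m)) / 2
          + (V ω - M) * ((Real.exp m - Real.exp (-m)) / (2 * m))) ∂Q :=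
          integral_mono_ae hintL hintR key
      _ = (Real.exp m + Real.exp (-m)) / 2 := by
          rw [integral_add (integrable_const _) (hintW.mul_const _), integral_const,
            integral_mul_const, hWzero]
          simp
      _ = Real.cosh m := (Real.cosh_eq m).symm
      _ ≤ Real.exp (m ^ 2 / 2) := Real.cosh_le_exp_half_sq m

end AuxGen



lemma seplip_dist_le {E : Type*} [PseudoMetricSpace E] {n : ℕ} {G : (Fin n → E) → ℝ} {c : ℝ}
    (hG : ∀ ξ j η, |G ξ - G (Function.update ξ j η)| ≤ c * dist (ξ j) η) (ξ ζ : Fin n → E) :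
    |G ξ - G ζ| ≤ c * ∑ i, dist (ξ i) (ζ i) := by
  classical
  have main : ∀ s : Finset (Fin n),
      |G ξ - G (s.piecewise ζ ξ)| ≤ c * ∑ i ∈ s, dist (ξ i) (ζ i) := by
    intro s
    induction s using Finset.induction_on with
    | empty => simp
    | @insert j s hj ih =>
        rw [Finset.piecewise_insert]
        have h1 : |G (s.piecewise ζ ξ) - G (Function.update (s.piecewise ζ ξ) j (ζ j))|
            ≤ c * dist (ξ j) (ζ j) := by
          have := hG (s.piecewise ζ ξ) j (ζ j)
          rwa [Finset.piecewise_eq_of_notMem _ _ _ hj] at this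
        calc |G ξ - G (Function.update (s.piecewise ζ ξ) j (ζ j))|
            ≤ |G ξ - G (s.piecewise ζ ξ)|
              + |G (s.piecewise ζ ξ) - G (Function.update (s.piecewise ζ ξ) j (ζ j))| := by
              have := abs_sub_abs_le_abs_sub (G ξ) (G (s.piecewise ζ ξ))
              exact abs_sub_le _ _ _
          _ ≤ c * ∑ i ∈ s, dist (ξ i) (ζ i) + c * dist (ξ j) (ζ j) := add_le_add ih h1
          _ = c * ∑ i ∈ insert j s, dist (ξ i) (ζ i) := by
              rw [Finset.sum_insert hj]; ring
  have := main Finset.univ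
  simpa [Finset.piecewise_univ] using this



section Tensor

variable {α : Type*} [NormedAddCommGroup α] [MeasurableSpace α] [BorelSpace α]
variable {P : Measure α} [IsProbabilityMeasure P]

lemma ae_pi_all {n : ℕ} {Qp : α → Prop} (h : ∀ᵐ ξ ∂P, Qp ξ) :
    ∀ᵐ y ∂(Measure.pi fun _ : Fin n => P), ∀ i, Qp (y i) := by
  rw [ae_all_iff]
  intro i
  have h0 : P {ξ | ¬ Qp ξ} = 0 := h
  have : (Measure.pi fun _ : Fin n => P) (Function.eval i ⁻¹' {ξ | ¬ Qp ξ}) = 0 :=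
    Measure.pi_eval_preimage_null _ h0
  exact this

lemma measurable_finCons {n : ℕ} :
    Measurable (fun z : α × (Fin n → α) => (Fin.cons z.1 z.2 : Fin (n+1) → α)) := by
  rw [measurable_pi_iff]
  intro i
  refine Fin.cases ?_ (fun j => ?_) i
  · simpa using measurable_fst
  · simp only [Fin.cons_succ]
    exact (measurable_pi_apply j).comp measurable_snd

lemma tensor_mgf (hP1 : ∀ᵐ ξ ∂P, ‖ξ‖ ≤ 1) {c : ℝ} (hc : 0 ≤ c) :
    ∀ (n : ℕ) (G : (Fin n → α) → ℝ), Measurable G →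
      (∀ ξ j η, |G ξ - G (Function.update ξ j η)| ≤ c * dist (ξ j) η) →
      ∫ ξ, Real.exp (G ξ - ∫ y, G y ∂(Measure.pi fun _ : Fin n => P))
          ∂(Measure.pi fun _ : Fin n => P) ≤ Real.exp (2 * c ^ 2 * n) := by
  intro n
  induction n with
  | zero =>
      intro G _ _
      have hG : ∀ y : Fin 0 → α, G y = G default := fun y => by
        rw [Subsingleton.elim y default]
      have h1 : (∫ y, G y ∂(Measure.pi fun _ : Fin 0 => P)) = G default := by
        rw [integral_congr_ae (Filter.Eventually.of_forall hG), integral_const]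
        simp
      have h2 : ∀ y : Fin 0 → α,
          Real.exp (G y - ∫ y, G y ∂(Measure.pi fun _ : Fin 0 => P)) = 1 := by
        intro y
        rw [h1, hG y]
        simp
      rw [integral_congr_ae (Filter.Eventually.of_forall h2), integral_const]
      simpa using Real.one_le_exp (by positivity)
  | succ n ih =>
      intro G hGmeas hGlip
      set ν : Measure (Fin n → α) := Measure.pi fun _ : Fin n => P with hν
      set νs : Measure (Fin (n+1) → α) := Measure.pi fun _ : Fin (n+1) => P with hνs
      set Gc : α × (Fin n → α) → ℝ := fun z => G (Fin.cons z.1 z.2) with hGc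
      have hGcmeas : Measurable Gc := hGmeas.comp measurable_finCons
      -- global bound for G in terms of coordinates
      set B₀ : ℝ := |G (fun _ => 0)| with hB₀
      have hGbd : ∀ ξ : Fin (n+1) → α, |G ξ| ≤ B₀ + c * ∑ i, ‖ξ i‖ := by
        intro ξ
        have h1 := seplip_dist_le hGlip ξ (fun _ => 0)
        simp only [dist_zero_right] at h1
        have h2 := abs_sub_abs_le_abs_sub (G ξ) (G (fun _ => 0))
        linarith
      -- measure preserving transport
      have hmp : MeasurePreserving
          (MeasurableEquiv.piFinSuccAbove (fun _ : Fin (n+1) => α) 0).symm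
          (P.prod ν) νs :=
        (measurePreserving_piFinSuccAbove (fun _ : Fin (n+1) => P) 0).symm
      have hesymm : ∀ z : α × (Fin n → α),
          (MeasurableEquiv.piFinSuccAbove (fun _ : Fin (n+1) => α) 0).symm z
            = Fin.cons z.1 z.2 := by
        intro z
        simp [MeasurableEquiv.piFinSuccAbove, Fin.insertNthEquiv, Fin.insertNth_zero']
      have htrans : ∀ f : (Fin (n+1) → α) → ℝ,
          ∫ ξ, f ξ ∂νs = ∫ z, f (Fin.cons z.1 z.2) ∂(P.prod ν) := by
        intro f
        rw [← hmp.integral_comp (MeasurableEquiv.measurableEmbedding _) f]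
        exact integral_congr_ae (Filter.Eventually.of_forall fun z => congrArg f (hesymm z))
      -- a.e. bounds
      have haeν : ∀ᵐ y ∂ν, ∀ i, ‖y i‖ ≤ 1 := ae_pi_all hP1
      have hae1 : ∀ᵐ z ∂(P.prod ν), ‖z.1‖ ≤ 1 := by
        have h1 : ∀ᵐ x ∂((P.prod ν).map Prod.fst), ‖x‖ ≤ 1 := by
          rw [Measure.map_fst_prod]
          simpa using hP1
        exact ae_of_ae_map measurable_fst.aemeasurable h1
      have hae2 : ∀ᵐ z ∂(P.prod ν), ∀ i, ‖z.2 i‖ ≤ 1 := by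
        have h1 : ∀ᵐ y ∂((P.prod ν).map Prod.snd), ∀ i, ‖y i‖ ≤ 1 := by
          rw [Measure.map_snd_prod]
          simpa using haeν
        exact ae_of_ae_map measurable_snd.aemeasurable h1
      -- bound for Gc
      have hGcbd : ∀ η : α, ∀ y : Fin n → α, (∀ i, ‖y i‖ ≤ 1) →
          |Gc (η, y)| ≤ B₀ + c * (‖η‖ + n) := by
        intro η y hy
        have h1 := hGbd (Fin.cons η y)
        have h2 : ∑ i, ‖(Fin.cons η y : Fin (n+1) → α) i‖ = ‖η‖ + ∑ i, ‖y i‖ := by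
          rw [Fin.sum_univ_succ]
          simp
        have h3 : ∑ i, ‖y i‖ ≤ (n : ℝ) := by
          calc ∑ i, ‖y i‖ ≤ ∑ _i : Fin n, (1:ℝ) := Finset.sum_le_sum fun i _ => hy i
            _ = n := by simp
        have : |Gc (η, y)| ≤ B₀ + c * (‖η‖ + ∑ i, ‖y i‖) := by
          rw [hGc]; simpa [h2] using h1
        refine this.trans ?_
        have := mul_le_mul_of_nonneg_left (add_le_add_left h3 ‖η‖) hc
        linarith
      -- sections of Gc: measurable, SepLip, integrable
      have hGcsec_meas : ∀ η : α, Measurable (fun y => Gc (η, y)) :=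
        fun η => hGcmeas.comp (measurable_const.prodMk measurable_id)
      have hGcsec_lip : ∀ η : α, ∀ (y : Fin n → α) (j : Fin n) (b : α),
          |Gc (η, y) - Gc (η, Function.update y j b)| ≤ c * dist (y j) b := by
        intro η y j b
        have hupdate : (Fin.cons η (Function.update y j b) : Fin (n+1) → α)
            = Function.update (Fin.cons η y) j.succ b := by
          funext i
          refine Fin.cases ?_ (fun k => ?_) i
          · simp [Fin.update_cons_zero]
            rw [Function.update_of_ne (Fin.succ_ne_zero j).symm]
            simp
          · by_cases hk : k = j
            · subst hk
              simp [Function.update_self]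
            · rw [Fin.cons_succ, Function.update_of_ne hk,
                Function.update_of_ne (fun h => hk (Fin.succ_injective _ h)), Fin.cons_succ]
        have := hGlip (Fin.cons η y) j.succ b
        rw [Fin.cons_succ] at this
        simpa [hGc, hupdate] using this
      have hGcsec_int : ∀ η : α, Integrable (fun y => Gc (η, y)) ν := by
        intro η
        refine integrable_of_aebdd (hGcsec_meas η).aestronglyMeasurable
          (B := B₀ + c * (‖η‖ + n)) ?_
        filter_upwards [haeν] with y hy
        exact hGcbd η y hy
      -- conditional mean
      set g1 : α → ℝ := fun η => ∫ y, Gc (η, y) ∂ν with hg1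
      have hg1meas : StronglyMeasurable g1 :=
        hGcmeas.stronglyMeasurable.integral_prod_right'
      have hg1lip : ∀ η η' : α, |g1 η - g1 η'| ≤ c * dist η η' := by
        intro η η'
        have hdiff : ∀ y : Fin n → α, |Gc (η, y) - Gc (η', y)| ≤ c * dist η η' := by
          intro y
          have hupd : (Fin.cons η' y : Fin (n+1) → α)
              = Function.update (Fin.cons η y) 0 η' := by
            funext i
            refine Fin.cases ?_ (fun k => ?_) i
            · simp [Function.update_self]
            · rw [Fin.cons_succ, Function.update_of_ne (Fin.succ_ne_zero k), Fin.cons_succ]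
          have := hGlip (Fin.cons η y) 0 η'
          rw [Fin.cons_zero] at this
          simpa [hGc, hupd, -Fin.update_cons_zero] using this
        have h1 : g1 η - g1 η' = ∫ y, (Gc (η, y) - Gc (η', y)) ∂ν := by
          rw [integral_sub (hGcsec_int η) (hGcsec_int η')]
        rw [h1]
        calc |∫ y, (Gc (η, y) - Gc (η', y)) ∂ν| ≤ ∫ y, |Gc (η, y) - Gc (η', y)| ∂ν := by
              simpa [Real.norm_eq_abs] using
                norm_integral_le_integral_norm (fun y => Gc (η, y) - Gc (η', y)) (μ := ν)
          _ ≤ ∫ _y, c * dist η η' ∂ν := by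
              refine integral_mono_ae (((hGcsec_int η).sub (hGcsec_int η')).abs) (integrable_const _) ?_
              exact Filter.Eventually.of_forall hdiff
          _ = c * dist η η' := by simp
      have hg1bd : ∀ η : α, |g1 η| ≤ B₀ + c * (‖η‖ + n) := by
        intro η
        have : |g1 η| ≤ ∫ y, |Gc (η, y)| ∂ν := by
          simpa [Real.norm_eq_abs] using norm_integral_le_integral_norm (fun y => Gc (η, y)) (μ := ν)
        refine this.trans ?_
        calc ∫ y, |Gc (η, y)| ∂ν ≤ ∫ _y, (B₀ + c * (‖η‖ + n)) ∂ν := by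
              refine integral_mono_ae (hGcsec_int η).abs (integrable_const _) ?_
              filter_upwards [haeν] with y hy
              exact hGcbd η y hy
          _ = B₀ + c * (‖η‖ + n) := by simp
      have hg1int : Integrable g1 P := by
        refine integrable_of_aebdd hg1meas.aestronglyMeasurable (B := B₀ + c * (1 + n)) ?_
        filter_upwards [hP1] with η hη
        refine (hg1bd η).trans ?_
        have := mul_le_mul_of_nonneg_left (add_le_add_right hη (n:ℝ)) hc
        linarith
      -- Fubini for G itself
      have haeGc : ∀ᵐ z ∂(P.prod ν), |Gc z| ≤ B₀ + c * (1 + n) := by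
        filter_upwards [hae1, hae2] with z h1 h2
        have h0 : |Gc (z.1, z.2)| ≤ B₀ + c * (‖z.1‖ + n) := hGcbd z.1 z.2 h2
        have h3 := mul_le_mul_of_nonneg_left (add_le_add_right h1 (n:ℝ)) hc
        calc |Gc z| = |Gc (z.1, z.2)| := rfl
          _ ≤ B₀ + c * (‖z.1‖ + n) := h0
          _ ≤ B₀ + c * (1 + n) := by linarith
      have hGcint : Integrable Gc (P.prod ν) :=
        integrable_of_aebdd hGcmeas.aestronglyMeasurable haeGc
      have hmean : (∫ ξ, G ξ ∂νs) = ∫ η, g1 η ∂P := by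
        rw [htrans G]
        exact integral_prod Gc hGcint
      -- main chain
      set m : ℝ := ∫ ξ, G ξ ∂νs with hm
      have hinner : ∀ η : α,
          ∫ y, Real.exp (Gc (η, y) - m) ∂ν
            ≤ Real.exp (2 * c ^ 2 * n) * Real.exp (g1 η - m) := by
        intro η
        have hsplit : ∀ y : Fin n → α,
            Real.exp (Gc (η, y) - m) = Real.exp (g1 η - m) * Real.exp (Gc (η, y) - g1 η) := by
          intro y
          rw [← Real.exp_add]
          congr 1
          ring
        calc ∫ y, Real.exp (Gc (η, y) - m) ∂ν
            = Real.exp (g1 η - m) * ∫ y, Real.exp (Gc (η, y) - g1 η) ∂ν := by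
              rw [← integral_const_mul]
              exact integral_congr_ae (Filter.Eventually.of_forall hsplit)
          _ ≤ Real.exp (g1 η - m) * Real.exp (2 * c ^ 2 * n) := by
              refine mul_le_mul_of_nonneg_left ?_ (Real.exp_pos _).le
              exact ih (fun y => Gc (η, y)) (hGcsec_meas η) (hGcsec_lip η)
          _ = Real.exp (2 * c ^ 2 * n) * Real.exp (g1 η - m) := mul_comm _ _
      have hstep2 : ∫ η, Real.exp (g1 η - ∫ x, g1 x ∂P) ∂P ≤ Real.exp ((2*c)^2/2) := by
        refine mgf_step hg1int (by positivity) ?_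
        filter_upwards [hP1] with η hη
        have h1 : g1 η - ∫ x, g1 x ∂P = ∫ η', (g1 η - g1 η') ∂P := by
          rw [integral_sub (integrable_const _) hg1int, integral_const]
          simp
        rw [h1]
        calc |∫ η', (g1 η - g1 η') ∂P| ≤ ∫ η', |g1 η - g1 η'| ∂P := by
              simpa [Real.norm_eq_abs] using
                norm_integral_le_integral_norm (fun η' => g1 η - g1 η') (μ := P)
          _ ≤ ∫ _η', 2 * c ∂P := by
              refine integral_mono_ae ((integrable_const (g1 η)).sub hg1int).abs
                (integrable_const _) ?_
              filter_upwards [hP1] with η' hη'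
              refine (hg1lip η η').trans ?_
              have hd : dist η η' ≤ 2 := by
                rw [dist_eq_norm]
                calc ‖η - η'‖ ≤ ‖η‖ + ‖η'‖ := norm_sub_le _ _
                  _ ≤ 2 := by linarith
              calc c * dist η η' ≤ c * 2 := mul_le_mul_of_nonneg_left hd hc
                _ = 2 * c := by ring
          _ = 2 * c := by simp
      have hexp_int : Integrable (fun z => Real.exp (Gc z - m)) (P.prod ν) := by
        refine integrable_of_aebdd
          ((Real.measurable_exp.comp (hGcmeas.sub measurable_const)).aestronglyMeasurable)
          (B := Real.exp (B₀ + c * (1 + n) - m)) ?_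
        filter_upwards [haeGc] with z hz
        rw [abs_of_nonneg (Real.exp_pos _).le]
        exact Real.exp_le_exp.2 (by have := (abs_le.1 hz).2; linarith)
      have hg1exp_int : Integrable (fun η => Real.exp (g1 η - m)) P := by
        refine integrable_of_aebdd
          ((Real.measurable_exp.comp (hg1meas.measurable.sub measurable_const)).aestronglyMeasurable)
          (B := Real.exp (B₀ + c * (1 + n) - m)) ?_
        filter_upwards [hP1] with η hη
        rw [abs_of_nonneg (Real.exp_pos _).le]
        refine Real.exp_le_exp.2 ?_
        have h1 := (abs_le.1 (hg1bd η)).2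
        have h2 := mul_le_mul_of_nonneg_left (add_le_add_right hη (n:ℝ)) hc
        linarith
      have houter_int : Integrable
          (fun η => Real.exp (2 * c ^ 2 * n) * Real.exp (g1 η - m)) P :=
        hg1exp_int.const_mul _
      calc ∫ ξ, Real.exp (G ξ - m) ∂νs
          = ∫ z, Real.exp (Gc z - m) ∂(P.prod ν) := htrans _
        _ = ∫ η, ∫ y, Real.exp (Gc (η, y) - m) ∂ν ∂P :=
            integral_prod _ hexp_int
        _ ≤ ∫ η, Real.exp (2 * c ^ 2 * n) * Real.exp (g1 η - m) ∂P := by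
            refine integral_mono_of_nonneg ?_ houter_int ?_
            · exact Filter.Eventually.of_forall fun η =>
                integral_nonneg fun y => (Real.exp_pos _).le
            · exact Filter.Eventually.of_forall hinner
        _ = Real.exp (2 * c ^ 2 * n) * ∫ η, Real.exp (g1 η - m) ∂P :=
            integral_const_mul _ _
        _ ≤ Real.exp (2 * c ^ 2 * n) * Real.exp ((2*c)^2/2) := by
            refine mul_le_mul_of_nonneg_left ?_ (Real.exp_pos _).le
            have hm' : m = ∫ x, g1 x ∂P := hmean
            rw [hm']
            exact hstep2
        _ = Real.exp (2 * c ^ 2 * (n+1 : ℕ)) := by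
            rw [← Real.exp_add]
            congr 1
            push_cast
            ring
end Tensor

section KF

variable {d : ℕ}


lemma lip_zero : LipschitzWith 1 (fun _ : (EuclideanSpace ℝ (Fin d)) => (0:ℝ)) :=
  (LipschitzWith.const 0).weaken zero_le_one

instance : Nonempty {g : (EuclideanSpace ℝ (Fin d)) → ℝ // LipschitzWith 1 g} := ⟨⟨fun _ => 0, lip_zero⟩⟩

/-- sup formula for the Kantorovich distance from an empirical measure. -/
def KF (μ : Measure (EuclideanSpace ℝ (Fin d))) (n : ℕ) (w : Fin n → (EuclideanSpace ℝ (Fin d))) : ℝ :=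
  ⨆ g : {g : (EuclideanSpace ℝ (Fin d)) → ℝ // LipschitzWith 1 g},
    ((n:ℝ)⁻¹ * ∑ i, g.1 (w i) - ∫ z, g.1 z ∂μ)

variable {μ : Measure (EuclideanSpace ℝ (Fin d))} [IsProbabilityMeasure μ]

lemma lip_abs_sub (g : (EuclideanSpace ℝ (Fin d)) → ℝ) (hg : LipschitzWith 1 g) (a b : (EuclideanSpace ℝ (Fin d))) :
    |g a - g b| ≤ dist a b := by
  have h := hg.dist_le_mul a b
  rw [Real.dist_eq] at h
  simpa using h

lemma lip_int (hμnorm : Integrable (fun z : (EuclideanSpace ℝ (Fin d)) => ‖z‖) μ)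
    (g : (EuclideanSpace ℝ (Fin d)) → ℝ) (hg : LipschitzWith 1 g) : Integrable g μ := by
  refine ((integrable_const |g 0|).add hμnorm).mono'
    hg.continuous.aestronglyMeasurable (Filter.Eventually.of_forall fun z => ?_)
  have h1 := lip_abs_sub g hg z 0
  rw [dist_zero_right] at h1
  have h2 := abs_sub_abs_le_abs_sub (g z) (g 0)
  show ‖g z‖ ≤ |g 0| + ‖z‖
  simp only [Real.norm_eq_abs]
  linarith

lemma KF_term_le (hμnorm : Integrable (fun z : (EuclideanSpace ℝ (Fin d)) => ‖z‖) μ) {n : ℕ} (hn : 1 ≤ n)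
    (w : Fin n → (EuclideanSpace ℝ (Fin d))) (g : (EuclideanSpace ℝ (Fin d)) → ℝ) (hg : LipschitzWith 1 g) :
    (n:ℝ)⁻¹ * ∑ i, g (w i) - ∫ z, g z ∂μ
      ≤ (n:ℝ)⁻¹ * ∑ i, ‖w i‖ + ∫ z, ‖z‖ ∂μ := by
  have hn0 : (n:ℝ) ≠ 0 := Nat.cast_ne_zero.2 (by omega)
  have h1 : (n:ℝ)⁻¹ * ∑ i, g (w i) - ∫ z, g z ∂μ
      = ∫ z, ((n:ℝ)⁻¹ * ∑ i, g (w i) - g z) ∂μ := by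
    rw [integral_sub (integrable_const _) (lip_int hμnorm g hg), integral_const]
    simp
  rw [h1]
  have h2 : ∀ z : (EuclideanSpace ℝ (Fin d)), (n:ℝ)⁻¹ * ∑ i, g (w i) - g z
      ≤ (n:ℝ)⁻¹ * ∑ i, ‖w i‖ + ‖z‖ := by
    intro z
    have hsum : ∑ i, g (w i) - (n:ℝ) * g z ≤ ∑ i, (‖w i‖ + ‖z‖) := by
      have : ∑ i, g (w i) - (n:ℝ) * g z = ∑ i : Fin n, (g (w i) - g z) := by
        rw [Finset.sum_sub_distrib]
        simp [mul_comm]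
      rw [this]
      refine Finset.sum_le_sum fun i _ => ?_
      have ha := (abs_le.1 (lip_abs_sub g hg (w i) z)).2
      have hb : dist (w i) z ≤ ‖w i‖ + ‖z‖ := by
        rw [dist_eq_norm]; exact norm_sub_le _ _
      linarith
    have h3 : (n:ℝ)⁻¹ * (∑ i, g (w i) - (n:ℝ) * g z)
        ≤ (n:ℝ)⁻¹ * ∑ i, (‖w i‖ + ‖z‖) :=
      mul_le_mul_of_nonneg_left hsum (by positivity)
    have h4 : (n:ℝ)⁻¹ * (∑ i, g (w i) - (n:ℝ) * g z)
        = (n:ℝ)⁻¹ * ∑ i, g (w i) - g z := by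
      field_simp
    have h5 : (n:ℝ)⁻¹ * ∑ i, (‖w i‖ + ‖z‖)
        = (n:ℝ)⁻¹ * ∑ i, ‖w i‖ + ‖z‖ := by
      rw [Finset.sum_add_distrib, Finset.sum_const, mul_add]
      congr 1
      simp only [Finset.card_univ, Fintype.card_fin, nsmul_eq_mul]
      field_simp
    rw [h4, h5] at h3
    exact h3
  calc ∫ z, ((n:ℝ)⁻¹ * ∑ i, g (w i) - g z) ∂μ
      ≤ ∫ z, ((n:ℝ)⁻¹ * ∑ i, ‖w i‖ + ‖z‖) ∂μ :=
        integral_mono_ae ((integrable_const _).sub (lip_int hμnorm g hg))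
          ((integrable_const _).add hμnorm) (Filter.Eventually.of_forall h2)
    _ = (n:ℝ)⁻¹ * ∑ i, ‖w i‖ + ∫ z, ‖z‖ ∂μ := by
        rw [integral_add (integrable_const _) hμnorm, integral_const]
        simp

lemma KF_bdd (hμnorm : Integrable (fun z : (EuclideanSpace ℝ (Fin d)) => ‖z‖) μ) {n : ℕ} (hn : 1 ≤ n)
    (w : Fin n → (EuclideanSpace ℝ (Fin d))) :
    BddAbove (Set.range fun g : {g : (EuclideanSpace ℝ (Fin d)) → ℝ // LipschitzWith 1 g} =>
      ((n:ℝ)⁻¹ * ∑ i, g.1 (w i) - ∫ z, g.1 z ∂μ)) := by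
  refine ⟨(n:ℝ)⁻¹ * ∑ i, ‖w i‖ + ∫ z, ‖z‖ ∂μ, ?_⟩
  rintro x ⟨g, rfl⟩
  exact KF_term_le hμnorm hn w g.1 g.2

lemma KF_le (hμnorm : Integrable (fun z : (EuclideanSpace ℝ (Fin d)) => ‖z‖) μ) {n : ℕ} (hn : 1 ≤ n)
    (w : Fin n → (EuclideanSpace ℝ (Fin d))) :
    KF μ n w ≤ (n:ℝ)⁻¹ * ∑ i, ‖w i‖ + ∫ z, ‖z‖ ∂μ :=
  ciSup_le fun g => KF_term_le hμnorm hn w g.1 g.2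

lemma KF_nonneg (hμnorm : Integrable (fun z : (EuclideanSpace ℝ (Fin d)) => ‖z‖) μ) {n : ℕ} (hn : 1 ≤ n)
    (w : Fin n → (EuclideanSpace ℝ (Fin d))) : 0 ≤ KF μ n w := by
  have := le_ciSup (KF_bdd hμnorm hn w) ⟨fun _ => 0, lip_zero⟩
  simpa [KF] using this

lemma KF_seplip (hμnorm : Integrable (fun z : (EuclideanSpace ℝ (Fin d)) => ‖z‖) μ) {n : ℕ} (hn : 1 ≤ n)
    (w : Fin n → (EuclideanSpace ℝ (Fin d))) (j : Fin n) (y : (EuclideanSpace ℝ (Fin d))) :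
    |KF μ n w - KF μ n (Function.update w j y)| ≤ (n:ℝ)⁻¹ * dist (w j) y := by
  refine abs_ciSup_sub_ciSup_le _ _ (KF_bdd hμnorm hn w)
    (KF_bdd hμnorm hn (Function.update w j y)) fun g => ?_
  have hcomp : ∀ i, g.1 (Function.update w j y i)
      = Function.update (fun i => g.1 (w i)) j (g.1 y) i := by
    intro i
    by_cases h : i = j
    · subst h; simp
    · simp [Function.update_of_ne h]
  have hsum : ∑ i, g.1 (Function.update w j y i)
      = ∑ i, Function.update (fun i => g.1 (w i)) j (g.1 y) i :=
    Finset.sum_congr rfl fun i _ => hcomp i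
  have hupd : ∑ i, Function.update (fun i => g.1 (w i)) j (g.1 y) i
      = g.1 y + ∑ i ∈ Finset.univ \ {j}, g.1 (w i) :=
    Finset.sum_update_of_mem (Finset.mem_univ j) _ _
  have horig : ∑ i, g.1 (w i) = (∑ i ∈ Finset.univ \ {j}, g.1 (w i)) + g.1 (w j) :=
    Finset.sum_eq_sum_sdiff_singleton_add (Finset.mem_univ j) _
  have hdiff : ((n:ℝ)⁻¹ * ∑ i, g.1 (w i) - ∫ z, g.1 z ∂μ)
      - ((n:ℝ)⁻¹ * ∑ i, g.1 (Function.update w j y i) - ∫ z, g.1 z ∂μ)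
      = (n:ℝ)⁻¹ * (g.1 (w j) - g.1 y) := by
    rw [hsum, hupd, horig]
    ring
  rw [hdiff, abs_mul, abs_of_nonneg (by positivity : (0:ℝ) ≤ (n:ℝ)⁻¹)]
  exact mul_le_mul_of_nonneg_left (lip_abs_sub g.1 g.2 (w j) y) (by positivity)

lemma KF_dist_le (hμnorm : Integrable (fun z : (EuclideanSpace ℝ (Fin d)) => ‖z‖) μ) {n : ℕ} (hn : 1 ≤ n)
    (w w' : Fin n → (EuclideanSpace ℝ (Fin d))) :
    |KF μ n w - KF μ n w'| ≤ (n:ℝ)⁻¹ * ∑ i, dist (w i) (w' i) :=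
  seplip_dist_le (fun ξ j η => KF_seplip hμnorm hn ξ j η) w w'

lemma KF_continuous (hμnorm : Integrable (fun z : (EuclideanSpace ℝ (Fin d)) => ‖z‖) μ) {n : ℕ} (hn : 1 ≤ n) :
    Continuous (KF μ n) := by
  have hlip : LipschitzWith 1 (KF μ n) := by
    refine LipschitzWith.of_dist_le_mul fun w w' => ?_
    rw [Real.dist_eq, NNReal.coe_one, one_mul]
    refine (KF_dist_le hμnorm hn w w').trans ?_
    have h1 : ∑ i, dist (w i) (w' i) ≤ ∑ _i : Fin n, dist w w' :=
      Finset.sum_le_sum fun i _ => dist_le_pi_dist w w' i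
    have h2 : (0:ℝ) ≤ (n:ℝ)⁻¹ := by positivity
    calc (n:ℝ)⁻¹ * ∑ i, dist (w i) (w' i) ≤ (n:ℝ)⁻¹ * ∑ _i : Fin n, dist w w' :=
          mul_le_mul_of_nonneg_left h1 h2
      _ = dist w w' := by
          rw [Finset.sum_const]
          simp
          field_simp
  exact hlip.continuous

end KF
end AuxLemmas

/-- Fluctuation bound for the Kantorovich distance between the observed empirical
measure and `μ`, for a system satisfying the exponential concentration inequality. -/
theorem observed_empirical_measure_exponential {d : ℕ}
    (X : Set (EuclideanSpace ℝ (Fin d))) (hX : IsCompact X)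
    (T : EuclideanSpace ℝ (Fin d) → EuclideanSpace ℝ (Fin d))
    (hT : Measurable T) (hTX : Set.MapsTo T X X)
    (μ : Measure (EuclideanSpace ℝ (Fin d))) [IsProbabilityMeasure μ]
    (hμX : μ X = 1) (hinv : μ.map T = μ)
    (C : ℝ) (hC : 0 < C)
    (hconc : ∀ (n : ℕ), 1 ≤ n → ∀ (K : (Fin n → EuclideanSpace ℝ (Fin d)) → ℝ)
      (L : Fin n → ℝ), SepLip K L →
      ∫ x, Real.exp (K (fun i => T^[(i : ℕ)] x)
          - ∫ z, K (fun i => T^[(i : ℕ)] z) ∂μ) ∂μ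
        ≤ Real.exp (C * ∑ j, L j ^ 2))
    (P : Measure (EuclideanSpace ℝ (Fin d))) [IsProbabilityMeasure P]
    (hP : ∀ᵐ ξ ∂P, ‖ξ‖ ≤ 1) :
    ∃ D : ℝ, 0 < D ∧ ∀ ε : ℝ, 0 < ε → ∀ (n : ℕ), 1 ≤ n → ∀ t : ℝ, 0 < t →
      ((μ.prod (Measure.pi fun _ : Fin n => P))
          {p | t + (∫ p', kantorovich (obsEmpirical T ε p') μ
                ∂(μ.prod (Measure.pi fun _ : Fin n => P)))
            < kantorovich (obsEmpirical T ε p) μ}).toReal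
        ≤ Real.exp (-(t ^ 2 * (n : ℝ)) / (4 * D * (1 + ε ^ 2))) := by
  classical
  have hXmeas : MeasurableSet X := hX.isClosed.measurableSet
  have hXc : μ Xᶜ = 0 := by
    have h := measure_compl hXmeas (measure_ne_top μ X)
    rw [hμX, measure_univ] at h
    simpa using h
  have haeX : ∀ᵐ x ∂μ, x ∈ X := by
    rw [ae_iff]
    exact hXc
  obtain ⟨R, hR⟩ := hX.isBounded.exists_norm_le
  set R' : ℝ := max R 0 with hR'
  have hR'0 : 0 ≤ R' := le_max_right _ _
  have hRX : ∀ z ∈ X, ‖z‖ ≤ R' := fun z hz => (hR z hz).trans (le_max_left _ _)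
  have hμnorm : Integrable (fun z : EuclideanSpace ℝ (Fin d) => ‖z‖) μ := by
    refine integrable_of_aebdd measurable_norm.aestronglyMeasurable (B := R') ?_
    filter_upwards [haeX] with z hz
    rw [abs_of_nonneg (norm_nonneg _)]
    exact hRX z hz
  set M : ℝ := ∫ z, ‖z‖ ∂μ with hM
  have hM0 : 0 ≤ M := integral_nonneg fun z => norm_nonneg _
  have hmapiter : ∀ k : ℕ, μ.map (T^[k]) = μ := by
    intro k
    induction k with
    | zero => simp
    | succ k ihk =>
        rw [Function.iterate_succ, ← Measure.map_map (hT.iterate k) hT, hinv, ihk]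
  have horb : ∀ k : ℕ, ∀ᵐ x ∂μ, T^[k] x ∈ X := by
    intro k
    have h2 : μ.map (T^[k]) Xᶜ = μ (T^[k] ⁻¹' Xᶜ) :=
      Measure.map_apply (hT.iterate k) hXmeas.compl
    rw [hmapiter k, hXc] at h2
    rw [ae_iff]
    exact h2.symm
  set D : ℝ := max C 2 with hD
  have hD0 : 0 < D := lt_of_lt_of_le (by norm_num : (0:ℝ) < 2) (le_max_right _ _)
  refine ⟨D, hD0, ?_⟩
  intro ε hε n hn t ht
  have hn0 : (0:ℝ) < (n:ℝ) := by exact_mod_cast Nat.lt_of_lt_of_le Nat.zero_lt_one hn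
  set ν : Measure (Fin n → EuclideanSpace ℝ (Fin d)) := Measure.pi fun _ => P with hνdef
  set ρ : Measure (EuclideanSpace ℝ (Fin d) × (Fin n → EuclideanSpace ℝ (Fin d)))
    := μ.prod ν with hρ
  set Y : EuclideanSpace ℝ (Fin d) × (Fin n → EuclideanSpace ℝ (Fin d))
      → (Fin n → EuclideanSpace ℝ (Fin d)) :=
    fun p i => T^[(i:ℕ)] p.1 + ε • p.2 i with hYdef
  set F : EuclideanSpace ℝ (Fin d) × (Fin n → EuclideanSpace ℝ (Fin d)) → ℝ :=
    fun p => KF μ n (Y p) with hFdef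
  have hYmeas : Measurable Y := measurable_pi_lambda _ fun i =>
    ((hT.iterate i).comp measurable_fst).add
      (((measurable_pi_apply i).comp measurable_snd).const_smul ε)
  have hFmeas : Measurable F := (KF_continuous hμnorm hn).measurable.comp hYmeas
  -- identification of kantorovich with F
  have hdirac_int : ∀ (g : EuclideanSpace ℝ (Fin d) → ℝ), StronglyMeasurable g →
      ∀ a, Integrable g (Measure.dirac a) := by
    intro g hg a
    constructor
    · exact hg.aestronglyMeasurable
    · rw [hasFiniteIntegral_iff_norm, lintegral_dirac' _ hg.measurable.norm.ennreal_ofReal]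
      exact ENNReal.ofReal_lt_top
  have hkant : ∀ p, kantorovich (obsEmpirical T ε p) μ = F p := by
    intro p
    unfold kantorovich obsEmpirical
    refine iSup_congr fun g => ?_
    congr 1
    rw [integral_smul_measure,
      integral_finset_sum_measure (fun i _ => hdirac_int g.1 g.2.continuous.stronglyMeasurable _)]
    have h1 : ∀ i : Fin n, ∫ x, g.1 x ∂(Measure.dirac (T^[(i:ℕ)] p.1 + ε • p.2 i))
        = g.1 (Y p i) := fun i => integral_dirac' _ _ g.2.continuous.stronglyMeasurable
    rw [Finset.sum_congr rfl fun i _ => h1 i]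
    rw [smul_eq_mul]
    congr 1
    rw [ENNReal.toReal_inv]
    simp
  have hFnonneg : ∀ p, 0 ≤ F p := fun p => KF_nonneg hμnorm hn _
  -- core pointwise bound
  have hFcore : ∀ x ξ, (∀ i : Fin n, T^[(i:ℕ)] x ∈ X) → (∀ i, ‖ξ i‖ ≤ 1) →
      F (x, ξ) ≤ R' + ε + M := by
    intro x ξ hx hξ
    refine (KF_le hμnorm hn (Y (x, ξ))).trans ?_
    have hYb : ∀ i : Fin n, ‖Y (x, ξ) i‖ ≤ R' + ε := by
      intro i
      calc ‖T^[(i:ℕ)] x + ε • ξ i‖ ≤ ‖T^[(i:ℕ)] x‖ + ‖ε • ξ i‖ := norm_add_le _ _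
        _ ≤ R' + ε := by
            have h3 : ‖ε • ξ i‖ = ε * ‖ξ i‖ := by
              rw [norm_smul, Real.norm_eq_abs, abs_of_pos hε]
            have h4 : ε * ‖ξ i‖ ≤ ε * 1 := mul_le_mul_of_nonneg_left (hξ i) hε.le
            have h5 := hRX _ (hx i)
            rw [h3]
            linarith
    have h6 : ∑ i, ‖Y (x, ξ) i‖ ≤ ∑ _i : Fin n, (R' + ε) :=
      Finset.sum_le_sum fun i _ => hYb i
    have h7 : (n:ℝ)⁻¹ * ∑ i, ‖Y (x, ξ) i‖ ≤ (n:ℝ)⁻¹ * (n * (R' + ε)) := by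
      refine mul_le_mul_of_nonneg_left (h6.trans (le_of_eq ?_)) (by positivity)
      rw [Finset.sum_const]
      simp only [Finset.card_univ, Fintype.card_fin, nsmul_eq_mul]
    have h8 : (n:ℝ)⁻¹ * (n * (R' + ε)) = R' + ε := by
      field_simp
    linarith
  -- a.e. facts on the product space
  have haeμorb : ∀ᵐ x ∂μ, ∀ i : Fin n, T^[(i:ℕ)] x ∈ X := by
    rw [ae_all_iff]
    exact fun i => horb i
  have hae1 : ∀ᵐ p ∂ρ, ∀ i : Fin n, T^[(i:ℕ)] p.1 ∈ X := by
    have h1 : ∀ᵐ x ∂(ρ.map Prod.fst), ∀ i : Fin n, T^[(i:ℕ)] x ∈ X := by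
      rw [hρ, Measure.map_fst_prod]
      simpa using haeμorb
    exact ae_of_ae_map measurable_fst.aemeasurable h1
  have hae2 : ∀ᵐ p ∂ρ, ∀ i : Fin n, ‖p.2 i‖ ≤ 1 := by
    have h1 : ∀ᵐ y ∂(ρ.map Prod.snd), ∀ i : Fin n, ‖y i‖ ≤ 1 := by
      rw [hρ, Measure.map_snd_prod]
      simpa using (ae_pi_all hP : ∀ᵐ y ∂ν, ∀ i : Fin n, ‖y i‖ ≤ 1)
    exact ae_of_ae_map measurable_snd.aemeasurable h1
  have hFbd : ∀ᵐ p ∂ρ, |F p| ≤ R' + ε + M := by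
    filter_upwards [hae1, hae2] with p hp1 hp2
    rw [abs_of_nonneg (hFnonneg p)]
    exact hFcore p.1 p.2 hp1 hp2
  have hFint : Integrable F ρ := integrable_of_aebdd hFmeas.aestronglyMeasurable hFbd
  set EF : ℝ := ∫ p, F p ∂ρ with hEF
  -- rewrite the target set
  have hintEq : (∫ p', kantorovich (obsEmpirical T ε p') μ ∂ρ) = EF :=
    integral_congr_ae (Filter.Eventually.of_forall fun p => hkant p)
  have hseteq : {p : EuclideanSpace ℝ (Fin d) × (Fin n → EuclideanSpace ℝ (Fin d)) |
      t + (∫ p', kantorovich (obsEmpirical T ε p') μ ∂ρ) < kantorovich (obsEmpirical T ε p) μ}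
      = {p | t + EF < F p} := by
    ext p
    simp only [Set.mem_setOf_eq, hintEq, hkant p]
  -- constants
  set A : ℝ := D * (1 + ε^2) with hA
  have hA0 : 0 < A := by
    rw [hA]
    have : (0:ℝ) < 1 + ε^2 := by positivity
    exact mul_pos hD0 this
  set lam : ℝ := t * n / (2 * A) with hlam
  have hlam0 : 0 < lam := div_pos (mul_pos ht hn0) (by linarith)
  -- the conditional mean G1
  set G1 : (Fin n → EuclideanSpace ℝ (Fin d)) → ℝ := fun ξ => ∫ x, F (x, ξ) ∂μ with hG1def
  have hG1meas : StronglyMeasurable G1 := hFmeas.stronglyMeasurable.integral_prod_left'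
  have hFsec_meas : ∀ ξ, Measurable (fun x => F (x, ξ)) := fun ξ =>
    hFmeas.comp (measurable_id.prodMk measurable_const)
  have hFsec_int : ∀ ξ, Integrable (fun x => F (x, ξ)) μ := by
    intro ξ
    refine integrable_of_aebdd (hFsec_meas ξ).aestronglyMeasurable
      (B := R' + ε * ∑ i, ‖ξ i‖ + M) ?_
    filter_upwards [haeμorb] with x hx
    rw [abs_of_nonneg (hFnonneg _)]
    refine (KF_le hμnorm hn (Y (x, ξ))).trans ?_
    have h6 : ∑ i, ‖Y (x, ξ) i‖ ≤ ∑ i, (R' + ε * ‖ξ i‖) := by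
      refine Finset.sum_le_sum fun i _ => ?_
      calc ‖T^[(i:ℕ)] x + ε • ξ i‖ ≤ ‖T^[(i:ℕ)] x‖ + ‖ε • ξ i‖ := norm_add_le _ _
        _ ≤ R' + ε * ‖ξ i‖ := by
            have h3 : ‖ε • ξ i‖ = ε * ‖ξ i‖ := by
              rw [norm_smul, Real.norm_eq_abs, abs_of_pos hε]
            have h5 := hRX _ (hx i)
            rw [h3]
            linarith
    have h7 : (n:ℝ)⁻¹ * ∑ i, ‖Y (x, ξ) i‖ ≤ (n:ℝ)⁻¹ * ∑ i, (R' + ε * ‖ξ i‖) :=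
      mul_le_mul_of_nonneg_left h6 (by positivity)
    have h8 : (n:ℝ)⁻¹ * ∑ i, (R' + ε * ‖ξ i‖) ≤ R' + ε * ∑ i, ‖ξ i‖ := by
      have hsplit : (∑ i, (R' + ε * ‖ξ i‖)) = (n:ℝ) * R' + ε * ∑ i, ‖ξ i‖ := by
        rw [Finset.sum_add_distrib, ← Finset.mul_sum, Finset.sum_const,
          Finset.card_univ, Fintype.card_fin, nsmul_eq_mul]
      rw [hsplit]
      have hS : (0:ℝ) ≤ ε * ∑ i, ‖ξ i‖ := by positivity
      have hin : (n:ℝ)⁻¹ * (n:ℝ) = 1 := inv_mul_cancel₀ (ne_of_gt hn0)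
      have hin2 : (n:ℝ)⁻¹ ≤ 1 := by
        rw [inv_le_one_iff₀]
        right
        exact_mod_cast hn
      have h9 : (n:ℝ)⁻¹ * (ε * ∑ i, ‖ξ i‖) ≤ ε * ∑ i, ‖ξ i‖ := by nlinarith
      calc (n:ℝ)⁻¹ * ((n:ℝ) * R' + ε * ∑ i, ‖ξ i‖)
          = R' + (n:ℝ)⁻¹ * (ε * ∑ i, ‖ξ i‖) := by
            rw [mul_add, ← mul_assoc, hin, one_mul]
        _ ≤ R' + ε * ∑ i, ‖ξ i‖ := by linarith
    linarith
  have hG1nonneg : ∀ ξ, 0 ≤ G1 ξ := fun ξ => integral_nonneg fun x => hFnonneg _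
  have hG1seplip : ∀ ξ (j : Fin n) η, |G1 ξ - G1 (Function.update ξ j η)|
      ≤ (lam * ε / n / lam) * dist (ξ j) η := by
    intro ξ j η
    have heq : lam * ε / n / lam = ε / n := by
      field_simp
    rw [heq]
    have hpoint : ∀ x, |F (x, ξ) - F (x, Function.update ξ j η)|
        ≤ (ε / n) * dist (ξ j) η := by
      intro x
      have hupd : Y (x, Function.update ξ j η)
          = Function.update (Y (x, ξ)) j (T^[(j:ℕ)] x + ε • η) := by
        funext i
        by_cases h : i = j
        · subst h
          simp [hYdef]
        · simp [hYdef, Function.update_of_ne h]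
      have hsl := KF_seplip hμnorm hn (Y (x, ξ)) j (T^[(j:ℕ)] x + ε • η)
      rw [← hupd] at hsl
      have hdist : dist (Y (x, ξ) j) (T^[(j:ℕ)] x + ε • η) = ε * dist (ξ j) η := by
        show dist (T^[(j:ℕ)] x + ε • ξ j) (T^[(j:ℕ)] x + ε • η) = ε * dist (ξ j) η
        rw [dist_add_left, dist_smul₀, Real.norm_eq_abs, abs_of_pos hε]
      rw [hdist] at hsl
      refine hsl.trans (le_of_eq ?_)
      field_simp
    have h1 : G1 ξ - G1 (Function.update ξ j η)
        = ∫ x, (F (x, ξ) - F (x, Function.update ξ j η)) ∂μ := by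
      rw [integral_sub (hFsec_int ξ) (hFsec_int _)]
    rw [h1]
    calc |∫ x, (F (x, ξ) - F (x, Function.update ξ j η)) ∂μ|
        ≤ ∫ x, |F (x, ξ) - F (x, Function.update ξ j η)| ∂μ := by
          simpa [Real.norm_eq_abs] using norm_integral_le_integral_norm
            (fun x => F (x, ξ) - F (x, Function.update ξ j η)) (μ := μ)
      _ ≤ ∫ _x, (ε / n) * dist (ξ j) η ∂μ := by
          refine integral_mono_ae ((hFsec_int ξ).sub (hFsec_int _)).abs
            (integrable_const _) (Filter.Eventually.of_forall hpoint)
      _ = (ε / n) * dist (ξ j) η := by simp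
  have hG1bd : ∀ᵐ ξ ∂ν, |G1 ξ| ≤ R' + ε + M := by
    filter_upwards [(ae_pi_all hP : ∀ᵐ y ∂ν, ∀ i : Fin n, ‖y i‖ ≤ 1)] with ξ hξ
    rw [abs_of_nonneg (hG1nonneg ξ)]
    calc G1 ξ ≤ ∫ _x, (R' + ε + M) ∂μ := by
          refine integral_mono_ae (hFsec_int ξ) (integrable_const _) ?_
          filter_upwards [haeμorb] with x hx
          exact hFcore x ξ hx hξ
      _ = R' + ε + M := by simp
  have hG1int : Integrable G1 ν := integrable_of_aebdd hG1meas.aestronglyMeasurable hG1bd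
  -- inner (orbit) concentration via hconc
  have hinner : ∀ ξ, ∫ x, Real.exp (lam * F (x, ξ) - lam * EF) ∂μ
      ≤ Real.exp (C * lam^2 / n) * Real.exp (lam * G1 ξ - lam * EF) := by
    intro ξ
    set Kξ : (Fin n → EuclideanSpace ℝ (Fin d)) → ℝ :=
      fun z => lam * KF μ n (fun i => z i + ε • ξ i) with hKξ
    have hsep : SepLip Kξ (fun _ => lam / n) := by
      intro z j y
      have hupd : (fun i => Function.update z j y i + ε • ξ i)
          = Function.update (fun i => z i + ε • ξ i) j (y + ε • ξ j) := by
        funext i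
        by_cases h : i = j
        · subst h
          simp
        · simp [Function.update_of_ne h]
      have h1 : |Kξ z - Kξ (Function.update z j y)|
          = lam * |KF μ n (fun i => z i + ε • ξ i)
              - KF μ n (fun i => Function.update z j y i + ε • ξ i)| := by
        rw [hKξ]
        simp only []
        rw [← mul_sub, abs_mul, abs_of_pos hlam0]
      rw [h1, hupd]
      have h2 := KF_seplip hμnorm hn (fun i => z i + ε • ξ i) j (y + ε • ξ j)
      have h3 : dist ((fun i => z i + ε • ξ i) j) (y + ε • ξ j) = dist (z j) y := by
        show dist (z j + ε • ξ j) (y + ε • ξ j) = dist (z j) y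
        rw [dist_add_right]
      rw [h3] at h2
      calc lam * |KF μ n (fun i => z i + ε • ξ i)
            - KF μ n (Function.update (fun i => z i + ε • ξ i) j (y + ε • ξ j))|
          ≤ lam * ((n:ℝ)⁻¹ * dist (z j) y) := mul_le_mul_of_nonneg_left h2 hlam0.le
        _ = (lam / n) * dist (z j) y := by ring
    have horbK : ∀ x, Kξ (fun i => T^[(i:ℕ)] x) = lam * F (x, ξ) := fun x => rfl
    have hKmean : ∫ z, Kξ (fun i => T^[(i:ℕ)] z) ∂μ = lam * G1 ξ := by
      simp only [horbK]
      rw [integral_const_mul]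
    have hcon := hconc n hn Kξ (fun _ => lam / n) hsep
    rw [hKmean] at hcon
    have hsum : C * ∑ _j : Fin n, (lam / n)^2 = C * lam^2 / n := by
      rw [Finset.sum_const, Finset.card_univ, Fintype.card_fin, nsmul_eq_mul]
      field_simp
    rw [hsum] at hcon
    calc ∫ x, Real.exp (lam * F (x, ξ) - lam * EF) ∂μ
        = Real.exp (lam * G1 ξ - lam * EF)
            * ∫ x, Real.exp (lam * F (x, ξ) - lam * G1 ξ) ∂μ := by
          rw [show (fun x => Real.exp (lam * F (x, ξ) - lam * EF))
              = fun x => Real.exp (lam * G1 ξ - lam * EF)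
                  * Real.exp (lam * F (x, ξ) - lam * G1 ξ) from funext fun x => by
            rw [← Real.exp_add]; congr 1; ring]
          exact integral_const_mul _ _
      _ ≤ Real.exp (lam * G1 ξ - lam * EF) * Real.exp (C * lam^2 / n) := by
          refine mul_le_mul_of_nonneg_left ?_ (Real.exp_pos _).le
          refine le_trans (le_of_eq (integral_congr_ae
            (Filter.Eventually.of_forall fun x => ?_))) hcon
          rw [horbK x]
      _ = Real.exp (C * lam^2 / n) * Real.exp (lam * G1 ξ - lam * EF) := mul_comm _ _
  -- Fubini
  have hEFG1 : EF = ∫ ξ, G1 ξ ∂ν := by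
    rw [hEF, hρ]
    exact integral_prod_symm F hFint
  have hexpmeas : Measurable (fun p => Real.exp (lam * F p - lam * EF)) :=
    Real.measurable_exp.comp ((hFmeas.const_mul lam).sub measurable_const)
  have hexpint : Integrable (fun p => Real.exp (lam * F p - lam * EF)) ρ := by
    refine integrable_of_aebdd hexpmeas.aestronglyMeasurable
      (B := Real.exp (lam * (R' + ε + M) - lam * EF)) ?_
    filter_upwards [hFbd] with p hp
    rw [abs_of_nonneg (Real.exp_pos _).le]
    refine Real.exp_le_exp.2 ?_
    have h1 := (abs_le.1 hp).2
    have h2 := mul_le_mul_of_nonneg_left h1 hlam0.le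
    linarith
  have hG1expint : Integrable (fun ξ => Real.exp (lam * G1 ξ - lam * EF)) ν := by
    refine integrable_of_aebdd
      ((Real.measurable_exp.comp ((hG1meas.measurable.const_mul lam).sub
        measurable_const)).aestronglyMeasurable)
      (B := Real.exp (lam * (R' + ε + M) - lam * EF)) ?_
    filter_upwards [hG1bd] with ξ hξ
    rw [abs_of_nonneg (Real.exp_pos _).le]
    refine Real.exp_le_exp.2 ?_
    have h1 := (abs_le.1 hξ).2
    have h2 := mul_le_mul_of_nonneg_left h1 hlam0.le
    linarith
  -- the moment generating function bound
  have hmgf : ∫ p, Real.exp (lam * F p - lam * EF) ∂ρ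
      ≤ Real.exp (lam^2 * (C + 2 * ε^2) / n) := by
    calc ∫ p, Real.exp (lam * F p - lam * EF) ∂ρ
        = ∫ ξ, ∫ x, Real.exp (lam * F (x, ξ) - lam * EF) ∂μ ∂ν := by
          rw [hρ]
          exact integral_prod_symm _ hexpint
      _ ≤ ∫ ξ, Real.exp (C * lam^2 / n) * Real.exp (lam * G1 ξ - lam * EF) ∂ν := by
          refine integral_mono_of_nonneg
            (Filter.Eventually.of_forall fun ξ =>
              integral_nonneg fun x => (Real.exp_pos _).le)
            (hG1expint.const_mul _)
            (Filter.Eventually.of_forall hinner)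
      _ = Real.exp (C * lam^2 / n) * ∫ ξ, Real.exp (lam * G1 ξ - lam * EF) ∂ν :=
          integral_const_mul _ _
      _ ≤ Real.exp (C * lam^2 / n) * Real.exp (2 * (lam * ε / n)^2 * n) := by
          refine mul_le_mul_of_nonneg_left ?_ (Real.exp_pos _).le
          have hc0 : 0 ≤ lam * ε / n := by positivity
          have hsl : ∀ (ξ : Fin n → EuclideanSpace ℝ (Fin d)) (j : Fin n) η,
              |lam * G1 ξ - lam * G1 (Function.update ξ j η)|
                ≤ (lam * ε / n) * dist (ξ j) η := by
            intro ξ j η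
            rw [← mul_sub, abs_mul, abs_of_pos hlam0]
            have := hG1seplip ξ j η
            have h2 := mul_le_mul_of_nonneg_left this hlam0.le
            calc lam * |G1 ξ - G1 (Function.update ξ j η)|
                ≤ lam * ((lam * ε / n / lam) * dist (ξ j) η) := h2
              _ = (lam * ε / n) * dist (ξ j) η := by
                  field_simp
          have htens := tensor_mgf hP hc0 n (fun ξ => lam * G1 ξ)
            (hG1meas.measurable.const_mul lam) hsl
          have hint2 : ∫ y, lam * G1 y ∂ν = lam * EF := by
            rw [integral_const_mul, ← hEFG1]
          rw [hint2] at htens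
          exact htens
      _ = Real.exp (lam^2 * (C + 2 * ε^2) / n) := by
          rw [← Real.exp_add]
          congr 1
          field_simp
  -- Markov / Chernoff
  have hsub : {p : EuclideanSpace ℝ (Fin d) × (Fin n → EuclideanSpace ℝ (Fin d)) |
        t + EF < F p}
      ⊆ {p | Real.exp (lam * t) ≤ Real.exp (lam * F p - lam * EF)} := by
    intro p hp
    simp only [Set.mem_setOf_eq] at hp ⊢
    refine Real.exp_le_exp.2 ?_
    nlinarith
  have hmarkov := mul_meas_ge_le_integral_of_nonneg (μ := ρ)
    (f := fun p => Real.exp (lam * F p - lam * EF))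
    (Filter.Eventually.of_forall fun p => (Real.exp_pos _).le) hexpint (Real.exp (lam * t))
  have hmono : (ρ {p | t + EF < F p}).toReal
      ≤ (ρ {p | Real.exp (lam * t) ≤ Real.exp (lam * F p - lam * EF)}).toReal :=
    ENNReal.toReal_mono (measure_ne_top _ _) (measure_mono hsub)
  have hfinal : (ρ {p | t + EF < F p}).toReal
      ≤ Real.exp (lam^2 * (C + 2 * ε^2) / n - lam * t) := by
    have h1 : Real.exp (lam * t)
        * (ρ {p | Real.exp (lam * t) ≤ Real.exp (lam * F p - lam * EF)}).toReal
        ≤ Real.exp (lam^2 * (C + 2 * ε^2) / n) := le_trans hmarkov hmgf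
    have h2 : (ρ {p | Real.exp (lam * t) ≤ Real.exp (lam * F p - lam * EF)}).toReal
        ≤ Real.exp (lam^2 * (C + 2 * ε^2) / n) / Real.exp (lam * t) := by
      rw [le_div_iff₀ (Real.exp_pos _)]
      calc (ρ _).toReal * Real.exp (lam * t)
          = Real.exp (lam * t) * (ρ _).toReal := mul_comm _ _
        _ ≤ _ := h1
    refine (hmono.trans h2).trans (le_of_eq ?_)
    rw [← Real.exp_sub]
  -- final numeric computation
  have hexpo : lam^2 * (C + 2 * ε^2) / n - lam * t
      ≤ -(t ^ 2 * (n:ℝ)) / (4 * D * (1 + ε ^ 2)) := by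
    have hCA : C + 2 * ε^2 ≤ A := by
      rw [hA]
      have h1 : C ≤ D := le_max_left _ _
      have h2 : (2:ℝ) ≤ D := le_max_right _ _
      nlinarith [sq_nonneg ε]
    have h3 : lam^2 * (C + 2 * ε^2) / n ≤ lam^2 * A / n := by
      gcongr
    have h4 : lam^2 * A / n - lam * t = -(t ^ 2 * (n:ℝ)) / (4 * A) := by
      rw [hlam]
      field_simp
      ring
    have h5 : -(t ^ 2 * (n:ℝ)) / (4 * D * (1 + ε ^ 2)) = -(t ^ 2 * (n:ℝ)) / (4 * A) := by
      rw [hA]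
      ring_nf
    rw [h5]
    linarith
  rw [hseteq]
  calc (ρ {p | t + EF < F p}).toReal
      ≤ Real.exp (lam^2 * (C + 2 * ε^2) / n - lam * t) := hfinal
    _ ≤ Real.exp (-(t ^ 2 * (n:ℝ)) / (4 * D * (1 + ε ^ 2))) := Real.exp_le_exp.2 hexpo
end
end

section
/- Suppose the dynamical system (X,T,μ) satisfies the polynomial concentration inequality with moment q ≥ 2 and constant C_q > 0. Then there exists a constant D_q > 0 such that for every ε > 0, every n ≥ 1, and every t > 0, the observed empirical measure Ẽ_n = (1/n) Σ_{i=0}^{n−1} δ_{y_i} satisfies μ_n ⊗ P^n(κ(Ẽ_n, μ) > t + E_{μ_n ⊗ P^n}[κ(Ẽ_n, μ)]) ≤ (D_q (1 + ε)^q / t^q) · n^{−q/2}. -/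
open MeasureTheory Real

noncomputable section

open Set Function

set_option linter.unusedSectionVars false
set_option linter.unusedVariables false

namespace Obs


lemma integrable_of_ae_bound {α : Type*} [MeasurableSpace α] {μ : Measure α} [IsFiniteMeasure μ]
    {f : α → ℝ} {B : ℝ} (hm : AEStronglyMeasurable f μ) (h : ∀ᵐ a ∂μ, |f a| ≤ B) :
    Integrable f μ :=
  Integrable.mono' (integrable_const B) hm (by simpa [Real.norm_eq_abs] using h)

lemma three_term (x y : ℝ) (hx : 0 ≤ x) (hy : 0 ≤ y) : ∀ k : ℕ,
    x^(k+2) + ((k:ℝ)+2)*x^(k+1)*y + y^(k+2) ≤ (x+y)^(k+2) := by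
  intro k; induction k with
  | zero => push_cast; nlinarith [sq_nonneg (x+y)]
  | succ k ih =>
    have ha : (0:ℝ) ≤ x^(k+1) := by positivity
    have hc : (0:ℝ) ≤ y^(k+2) := by positivity
    have h := mul_le_mul_of_nonneg_right ih (by linarith : (0:ℝ) ≤ x + y)
    have step : x^(k+1+2) + ((k:ℝ)+1+2)*x^(k+1+1)*y + y^(k+1+2)
        ≤ (x^(k+2) + ((k:ℝ)+2)*x^(k+1)*y + y^(k+2)) * (x+y) := by
      have e2 : x^(k+2) = x^(k+1)*x := by ring
      have e4 : y^(k+1+2) = y^(k+2)*y := by ring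
      have e5 : x^(k+1+2) = x^(k+1)*x*x := by ring
      rw [e2, e4, e5]
      nlinarith [mul_nonneg (mul_nonneg ha hy) hy, mul_nonneg hc hx,
        mul_nonneg (mul_nonneg (mul_nonneg ha hy) hy) (Nat.cast_nonneg k : (0:ℝ) ≤ k)]
    calc x^(k+1+2) + (↑(k+1)+2)*x^(k+1+1)*y + y^(k+1+2)
        ≤ (x^(k+2) + ((k:ℝ)+2)*x^(k+1)*y + y^(k+2)) * (x+y) := by push_cast; exact step
      _ ≤ (x+y)^(k+2) * (x+y) := h
      _ = (x+y)^(k+1+2) := by ring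

lemma mono_bound {r b : ℝ} (hr : 0 ≤ r) (hb : 0 ≤ b) {m i : ℕ} (h2 : 2 ≤ i) (him : i ≤ 2*m) :
    r^(2*m-i) * b^i ≤ r^(2*m-2)*b^2 + b^(2*m) := by
  rcases le_total b r with h | h
  · have e : r^(2*m-i)*b^i = (r^(2*m-i)*b^(i-2))*b^2 := by
      rw [mul_assoc, ← pow_add]; congr 2; omega
    rw [e]
    have h1 : r^(2*m-i)*b^(i-2) ≤ r^(2*m-i)*r^(i-2) :=
      mul_le_mul_of_nonneg_left (pow_le_pow_left₀ hb h _) (pow_nonneg hr _)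
    have h2' : r^(2*m-i)*r^(i-2) = r^(2*m-2) := by rw [← pow_add]; congr 1; omega
    calc (r^(2*m-i)*b^(i-2))*b^2 ≤ r^(2*m-2)*b^2 := by
          rw [← h2']; exact mul_le_mul_of_nonneg_right h1 (pow_nonneg hb _)
      _ ≤ r^(2*m-2)*b^2 + b^(2*m) := le_add_of_nonneg_right (pow_nonneg hb _)
  · have h1 : r^(2*m-i)*b^i ≤ b^(2*m-i)*b^i :=
      mul_le_mul_of_nonneg_right (pow_le_pow_left₀ hr h _) (pow_nonneg hb _)
    refine le_add_of_nonneg_of_le (by positivity) ?_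
    rw [← pow_add] at h1; rwa [show 2*m-i+i = 2*m by omega] at h1
  
lemma alg_main {r b : ℝ} (hb : 0 ≤ b) {m Kk : ℕ} (hm : 1 ≤ m) (hK : m ≤ Kk) :
    |r|^(2*m) + (∑ i ∈ Finset.Icc 2 (2*m), ((2*m).choose i : ℝ) * (|r|^(2*m-i) * b^i))
      ≤ (r^2 + 8^Kk*b^2)^m := by
  have habs : ∀ j : ℕ, |r|^(2*j) = (r^2)^j := by
    intro j; rw [pow_mul, sq_abs]
  have hsum : (∑ i ∈ Finset.Icc 2 (2*m), ((2*m).choose i : ℝ) * (|r|^(2*m-i) * b^i))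
      ≤ (4:ℝ)^m * ((r^2)^(m-1)*b^2 + b^(2*m)) := by
    have hM : ∀ i ∈ Finset.Icc 2 (2*m), ((2*m).choose i : ℝ) * (|r|^(2*m-i) * b^i)
        ≤ ((2*m).choose i : ℝ) * ((r^2)^(m-1)*b^2 + b^(2*m)) := by
      intro i hi
      rw [Finset.mem_Icc] at hi
      have h := mono_bound (abs_nonneg r) hb hi.1 hi.2
      have e : |r|^(2*m-2) = (r^2)^(m-1) := by
        rw [show 2*m-2 = 2*(m-1) by omega]; exact habs _
      rw [e] at h
      exact mul_le_mul_of_nonneg_left h (by positivity)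
    calc (∑ i ∈ Finset.Icc 2 (2*m), ((2*m).choose i : ℝ) * (|r|^(2*m-i) * b^i))
        ≤ ∑ i ∈ Finset.Icc 2 (2*m), ((2*m).choose i : ℝ) * ((r^2)^(m-1)*b^2 + b^(2*m)) :=
          Finset.sum_le_sum hM
      _ = (∑ i ∈ Finset.Icc 2 (2*m), ((2*m).choose i : ℝ)) * ((r^2)^(m-1)*b^2 + b^(2*m)) := by
          rw [Finset.sum_mul]
      _ ≤ (4:ℝ)^m * ((r^2)^(m-1)*b^2 + b^(2*m)) := by
          refine mul_le_mul_of_nonneg_right ?_ (by positivity)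
          have h1 : (∑ i ∈ Finset.Icc 2 (2*m), ((2*m).choose i : ℝ))
              ≤ ∑ i ∈ Finset.range (2*m+1), ((2*m).choose i : ℝ) := by
            refine Finset.sum_le_sum_of_subset_of_nonneg ?_ (fun i _ _ => by positivity)
            intro i hi; rw [Finset.mem_Icc] at hi; rw [Finset.mem_range]; omega
          have h2 : (∑ i ∈ Finset.range (2*m+1), ((2*m).choose i : ℝ)) = (4:ℝ)^m := by
            rw [← Nat.cast_sum, Nat.sum_range_choose]
            push_cast
            rw [pow_mul]; norm_num
          linarith
  have h8 : (8:ℝ) ≤ 8^Kk := le_self_pow₀ (by norm_num) (by omega)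
  have key : (r^2)^m + (4:ℝ)^m * ((r^2)^(m-1)*b^2 + b^(2*m)) ≤ (r^2 + 8^Kk*b^2)^m := by
    have hx : (0:ℝ) ≤ r^2 := sq_nonneg r
    have hy : (0:ℝ) ≤ 8^Kk*b^2 := by positivity
    rcases eq_or_lt_of_le hm with h1 | h2
    · -- m = 1
      rw [← h1]; norm_num
      nlinarith [mul_nonneg (sub_nonneg.2 h8) (sq_nonneg b)]
    · -- 2 ≤ m
      obtain ⟨k, hk⟩ : ∃ k, m = k + 2 := ⟨m - 2, by omega⟩
      subst hk
      have h3 := three_term (r^2) (8^Kk*b^2) hx hy k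
      have h4 : (4:ℝ)^(k+2) * ((r^2)^(k+2-1)*b^2) ≤ ((k:ℝ)+2) * (r^2)^(k+1) * (8^Kk*b^2) := by
        have h45 : (4:ℝ)^(k+2) ≤ 8^Kk := by
          calc (4:ℝ)^(k+2) ≤ 8^(k+2) := by gcongr <;> norm_num
            _ ≤ 8^Kk := pow_le_pow_right₀ (by norm_num) (by omega)
        have : (4:ℝ)^(k+2) ≤ ((k:ℝ)+2) * 8^Kk := by nlinarith [Nat.cast_nonneg (α := ℝ) k]
        calc (4:ℝ)^(k+2) * ((r^2)^(k+2-1)*b^2) = ((4:ℝ)^(k+2)) * (r^2)^(k+1) * b^2 := by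
              rw [show k+2-1 = k+1 from rfl]; ring
          _ ≤ (((k:ℝ)+2) * 8^Kk) * (r^2)^(k+1) * b^2 := by
              have hp : (0:ℝ) ≤ (r^2)^(k+1) := pow_nonneg hx _
              have hb2 : (0:ℝ) ≤ b^2 := sq_nonneg b
              nlinarith [mul_nonneg (mul_nonneg (sub_nonneg.2 this) hp) hb2]
          _ = ((k:ℝ)+2) * (r^2)^(k+1) * (8^Kk*b^2) := by ring
      have h5 : (4:ℝ)^(k+2) * b^(2*(k+2)) ≤ (8^Kk*b^2)^(k+2) := by
        rw [mul_pow, pow_mul]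
        have : (4:ℝ)^(k+2) ≤ (8^Kk)^(k+2) :=
          pow_le_pow_left₀ (by norm_num) (by linarith) _
        exact mul_le_mul_of_nonneg_right this (by positivity)
      have expand : (4:ℝ)^(k+2) * ((r^2)^(k+2-1)*b^2 + b^(2*(k+2)))
          = (4:ℝ)^(k+2) * ((r^2)^(k+2-1)*b^2) + (4:ℝ)^(k+2) * b^(2*(k+2)) := by ring
      rw [expand]
      linarith
  calc |r|^(2*m) + (∑ i ∈ Finset.Icc 2 (2*m), ((2*m).choose i : ℝ) * (|r|^(2*m-i) * b^i))
      ≤ (r^2)^m + (4:ℝ)^m * ((r^2)^(m-1)*b^2 + b^(2*m)) := by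
        rw [habs m]; exact add_le_add_right hsum _
    _ ≤ _ := key


section MZ
variable {α : Type*} [MeasurableSpace α] [PseudoMetricSpace α]
variable {P : Measure α} [IsProbabilityMeasure P]

lemma ae_mem_of_prob_one {S : Set α} (hSm : MeasurableSet S) (hS1 : P S = 1) :
    ∀ᵐ a ∂P, a ∈ S := by
  rw [ae_iff]
  exact (prob_compl_eq_zero_iff hSm).2 hS1

lemma ae_pi_mem {S : Set α} (hSm : MeasurableSet S) (hS1 : P S = 1) (n : ℕ) :
    ∀ᵐ ξ ∂(Measure.pi fun _ : Fin n => P), ∀ i, ξ i ∈ S := by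
  have h1 : (Measure.pi fun _ : Fin n => P) (Set.pi univ fun _ => S) = 1 := by
    rw [Measure.pi_pi]; simp [hS1]
  have h2 := (prob_compl_eq_zero_iff (MeasurableSet.univ_pi fun _ => hSm)).2 h1
  rw [ae_iff]
  refine measure_mono_null (fun ξ hξ => ?_) h2
  simp only [mem_setOf_eq, not_forall] at hξ
  simp only [mem_compl_iff, Set.mem_pi, mem_univ, forall_true_left]
  intro h
  obtain ⟨i, hi⟩ := hξ
  exact hi (h i)

lemma ae_prod_mem {β : Type*} [MeasurableSpace β] {ν : Measure β} [SFinite ν]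
    {A : Set α} {Bs : Set β} (hA : MeasurableSet A) (hB : MeasurableSet Bs)
    (h1 : P Aᶜ = 0) (h2 : ν Bsᶜ = 0) :
    ∀ᵐ p ∂(P.prod ν), p.1 ∈ A ∧ p.2 ∈ Bs := by
  rw [ae_iff]
  have hsub : {p : α × β | ¬(p.1 ∈ A ∧ p.2 ∈ Bs)}
      ⊆ (Aᶜ ×ˢ (univ : Set β)) ∪ ((univ : Set α) ×ˢ Bsᶜ) := by
    intro p hp
    simp only [mem_setOf_eq, not_and_or] at hp
    rcases hp with h | h
    · exact Or.inl ⟨h, trivial⟩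
    · exact Or.inr ⟨trivial, h⟩
  refine measure_mono_null hsub (measure_union_null ?_ ?_) <;>
    rw [Measure.prod_prod] <;> simp [h1, h2]

lemma tele {n : ℕ} {G : (Fin n → α) → ℝ} {c : ℝ} (hc : 0 ≤ c)
    (hG : ∀ x (j : Fin n) w, |G x - G (Function.update x j w)| ≤ c * dist (x j) w)
    {S : Set α} (hSd : ∀ a ∈ S, ∀ b ∈ S, dist a b ≤ 2)
    {ξ ξ' : Fin n → α} (hξ : ∀ i, ξ i ∈ S) (hξ' : ∀ i, ξ' i ∈ S) :
    |G ξ - G ξ'| ≤ n * (2*c) := by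
  classical
  have key : ∀ s : Finset (Fin n), |G ξ - G (s.piecewise ξ' ξ)| ≤ s.card * (2*c) := by
    intro s
    induction s using Finset.induction_on with
    | empty => simp
    | @insert j s hj ih =>
      rw [Finset.piecewise_insert]
      have h1 : |G (s.piecewise ξ' ξ) - G (Function.update (s.piecewise ξ' ξ) j (ξ' j))|
          ≤ c * dist (s.piecewise ξ' ξ j) (ξ' j) := hG _ _ _
      have hmem : s.piecewise ξ' ξ j ∈ S := by
        by_cases h : j ∈ s
        · rw [Finset.piecewise_eq_of_mem _ _ _ h]; exact hξ' j
        · rw [Finset.piecewise_eq_of_notMem _ _ _ h]; exact hξ j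
      have h2 : dist (s.piecewise ξ' ξ j) (ξ' j) ≤ 2 := hSd _ hmem _ (hξ' j)
      have hcard : ((insert j s).card : ℝ) = s.card + 1 := by
        rw [Finset.card_insert_of_notMem hj]; push_cast; ring
      calc |G ξ - G (Function.update (s.piecewise ξ' ξ) j (ξ' j))|
          ≤ |G ξ - G (s.piecewise ξ' ξ)|
            + |G (s.piecewise ξ' ξ) - G (Function.update (s.piecewise ξ' ξ) j (ξ' j))| := by
            have := abs_sub_le (G ξ) (G (s.piecewise ξ' ξ))
              (G (Function.update (s.piecewise ξ' ξ) j (ξ' j)))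
            linarith
        _ ≤ s.card * (2*c) + c * 2 := by
            refine add_le_add ih (h1.trans ?_)
            exact mul_le_mul_of_nonneg_left h2 hc
        _ ≤ ((insert j s).card : ℝ) * (2*c) := by rw [hcard]; ring_nf; linarith
  have h := key Finset.univ
  rw [Finset.piecewise_univ] at h
  simpa [Finset.card_univ] using h

lemma mz {S : Set α} (hSm : MeasurableSet S) (hS1 : P S = 1)
    (hSd : ∀ a ∈ S, ∀ b ∈ S, dist a b ≤ 2) {c : ℝ} (hc : 0 ≤ c) (Kk : ℕ) :
    ∀ (n : ℕ) (G : (Fin n → α) → ℝ), Measurable G →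
      (∀ x (j : Fin n) w, |G x - G (Function.update x j w)| ≤ c * dist (x j) w) →
      ∀ m, m ≤ Kk →
      ∫ ξ, |G ξ - ∫ η, G η ∂(Measure.pi fun _ : Fin n => P)| ^ (2*m)
          ∂(Measure.pi fun _ : Fin n => P)
        ≤ (8^Kk * ((n:ℝ) * (2*c)^2)) ^ m := by
  have hSne : S.Nonempty := by
    rcases S.eq_empty_or_nonempty with h | h
    · exfalso; rw [h] at hS1; simp at hS1
    · exact h
  obtain ⟨s₀, hs₀⟩ := hSne
  intro n
  induction n with
  | zero =>
    intro G hGm hGlip m hmK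
    haveI : IsProbabilityMeasure (Measure.pi fun _ : Fin 0 => P) := inferInstance
    have hconst : ∀ ξ : Fin 0 → α, ξ = (fun i => i.elim0) := fun ξ => funext fun i => i.elim0
    have hint : ∫ η, G η ∂(Measure.pi fun _ : Fin 0 => P) = G (fun i => i.elim0) := by
      have : (fun η : Fin 0 → α => G η) = fun _ => G (fun i => i.elim0) :=
        funext fun η => by rw [hconst η]
      rw [this, integral_const, probReal_univ, one_smul]
    rcases Nat.eq_zero_or_pos m with hm0 | hm1
    · subst hm0
      simp only [Nat.mul_zero, pow_zero]
      rw [integral_const, probReal_univ, one_smul]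
    · have hzero : (fun ξ : Fin 0 → α => |G ξ - ∫ η, G η ∂(Measure.pi fun _ : Fin 0 => P)| ^ (2*m))
          = fun _ => 0 := by
        funext ξ
        rw [hint, hconst ξ, sub_self, abs_zero, zero_pow (by omega)]
      rw [hzero, integral_zero]
      positivity
  | succ n IH =>
    intro G hGm hGlip m hmK
    set ν : Measure (Fin n → α) := Measure.pi fun _ : Fin n => P with hνdef
    set Pn : Measure (Fin (n+1) → α) := Measure.pi fun _ : Fin (n+1) => P with hPndef
    haveI : IsProbabilityMeasure ν := by rw [hνdef]; infer_instance
    haveI : IsProbabilityMeasure Pn := by rw [hPndef]; infer_instance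
    have MP := measurePreserving_piFinSuccAbove (fun _ : Fin (n+1) => P) 0
    have key_int : ∀ f : (Fin (n+1) → α) → ℝ,
        ∫ ξ, f ξ ∂Pn = ∫ p, f (Fin.cons p.1 p.2) ∂(P.prod ν) := by
      intro f
      have h := MP.integral_comp (MeasurableEquiv.measurableEmbedding _)
        (fun p => f (Fin.cons p.1 p.2))
      rw [← h]
      congr 1
      ext ξ
      congr 1
      show ξ = Fin.cons (ξ 0) (Fin.removeNth 0 ξ)
      exact (Fin.cons_self_tail ξ).symm
    have hcons2 : Measurable (fun p : α × (Fin n → α) => (Fin.cons p.1 p.2 : Fin (n+1) → α)) := by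
      apply measurable_pi_lambda
      intro i
      refine Fin.cases ?_ ?_ i
      · simpa using measurable_fst
      · intro j; simpa [Function.comp_def] using (measurable_pi_apply j).comp measurable_snd
    have hconsa : ∀ η : Fin n → α, Measurable (fun a : α => (Fin.cons a η : Fin (n+1) → α)) := by
      intro η
      apply measurable_pi_lambda
      intro i
      refine Fin.cases ?_ ?_ i
      · simpa using measurable_id'
      · intro j; simpa using measurable_const
    set G₂ : α × (Fin n → α) → ℝ := fun p => G (Fin.cons p.1 p.2) with hG₂def
    have hG₂m : Measurable G₂ := hGm.comp hcons2
    have hslice_m : ∀ η : Fin n → α, Measurable (fun a => G (Fin.cons a η)) :=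
      fun η => hGm.comp (hconsa η)
    have haeP : ∀ᵐ a ∂P, a ∈ S := ae_mem_of_prob_one hSm hS1
    have habs_helper : ∀ u v : ℝ, |u - v| ≤ 2*c → |u| ≤ |v| + 2*c := by
      intro u v h
      have := abs_sub_abs_le_abs_sub u v
      linarith
    have hslice_bnd : ∀ (η : Fin n → α), ∀ a ∈ S,
        |G (Fin.cons a η)| ≤ |G (Fin.cons s₀ η)| + 2*c := by
      intro η a ha
      have h := hGlip (Fin.cons s₀ η) 0 a
      rw [Fin.update_cons_zero, Fin.cons_zero] at h
      have hd : dist s₀ a ≤ 2 := hSd _ hs₀ _ ha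
      refine habs_helper _ _ ?_
      rw [abs_sub_comm]
      calc |G (Fin.cons s₀ η) - G (Fin.cons a η)| ≤ c * dist s₀ a := h
        _ ≤ 2*c := by nlinarith
    have hslice_int : ∀ η : Fin n → α, Integrable (fun a => G (Fin.cons a η)) P := by
      intro η
      refine integrable_of_ae_bound (B := |G (Fin.cons s₀ η)| + 2*c)
        (hslice_m η).aestronglyMeasurable ?_
      filter_upwards [haeP] with a ha
      exact hslice_bnd η a ha
    set g : (Fin n → α) → ℝ := fun η => ∫ a, G (Fin.cons a η) ∂P with hgdef
    have hgm : Measurable g := hG₂m.stronglyMeasurable.integral_prod_left'.measurable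
    have hglip : ∀ η (j : Fin n) w, |g η - g (Function.update η j w)| ≤ c * dist (η j) w := by
      intro η j w
      have hpt : ∀ a, |G (Fin.cons a η) - G (Fin.cons a (Function.update η j w))|
          ≤ c * dist (η j) w := by
        intro a
        have h := hGlip (Fin.cons a η) j.succ w
        rw [← Fin.cons_update] at h
        rwa [Fin.cons_succ] at h
      have hsub : g η - g (Function.update η j w)
          = ∫ a, (G (Fin.cons a η) - G (Fin.cons a (Function.update η j w))) ∂P :=
        (integral_sub (hslice_int η) (hslice_int _)).symm
      rw [hsub]
      calc |∫ a, (G (Fin.cons a η) - G (Fin.cons a (Function.update η j w))) ∂P|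
          ≤ ∫ a, |G (Fin.cons a η) - G (Fin.cons a (Function.update η j w))| ∂P := by
            simpa [Real.norm_eq_abs] using
              norm_integral_le_integral_norm
                (fun a => G (Fin.cons a η) - G (Fin.cons a (Function.update η j w)))
        _ ≤ ∫ _a, c * dist (η j) w ∂P :=
            integral_mono ((hslice_int η).sub (hslice_int _)).abs (integrable_const _)
              (fun a => hpt a)
        _ = c * dist (η j) w := by rw [integral_const, probReal_univ, one_smul]
    -- a.e. bounds on product and on η
    set B : ℝ := |G (fun _ => s₀)| + (n+1) * (2*c) with hBdef
    have hG_bnd : ∀ ξ : Fin (n+1) → α, (∀ i, ξ i ∈ S) → |G ξ| ≤ B := by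
      intro ξ hξ
      have h := tele hc hGlip hSd hξ (fun i => hs₀)
      have := abs_sub_abs_le_abs_sub (G ξ) (G (fun _ => s₀))
      rw [hBdef]
      push_cast at h ⊢
      linarith
    have haeν : ∀ᵐ η ∂ν, ∀ i, η i ∈ S := ae_pi_mem hSm hS1 n
    have haeprod : ∀ᵐ p ∂(P.prod ν), p.1 ∈ S ∧ ∀ i, p.2 i ∈ S := by
      have h := ae_prod_mem (ν := ν) hSm (MeasurableSet.univ_pi fun _ : Fin n => hSm)
        ((prob_compl_eq_zero_iff hSm).2 hS1)
        ((prob_compl_eq_zero_iff (MeasurableSet.univ_pi fun _ : Fin n => hSm)).2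
          (by rw [hνdef, Measure.pi_pi]; simp [hS1]))
      filter_upwards [h] with p hp
      exact ⟨hp.1, fun i => hp.2 i trivial⟩
    have hconsS : ∀ (a : α) (η : Fin n → α), a ∈ S → (∀ i, η i ∈ S) →
        ∀ i, (Fin.cons a η : Fin (n+1) → α) i ∈ S := by
      intro a η ha hη i
      refine Fin.cases ?_ ?_ i
      · rwa [Fin.cons_zero]
      · intro j; rw [Fin.cons_succ]; exact hη j
    have hG₂ae : ∀ᵐ p ∂(P.prod ν), |G₂ p| ≤ B := by
      filter_upwards [haeprod] with p hp
      exact hG_bnd _ (hconsS p.1 p.2 hp.1 hp.2)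
    have hG₂int : Integrable G₂ (P.prod ν) :=
      integrable_of_ae_bound hG₂m.aestronglyMeasurable hG₂ae
    set EG : ℝ := ∫ ξ, G ξ ∂Pn with hEGdef
    have hEGg : EG = ∫ η, g η ∂ν := by
      rw [hEGdef, key_int G]
      exact integral_prod_symm G₂ hG₂int
    rcases Nat.eq_zero_or_pos m with hm0 | hm1
    · subst hm0
      simp only [Nat.mul_zero, pow_zero]
      rw [integral_const, probReal_univ, one_smul]
    -- main work
    set b : ℝ := 2*c with hbdef
    have hb : 0 ≤ b := by rw [hbdef]; linarith
    set Cb : ℝ := 8^Kk * b^2 with hCbdef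
    have hCb : 0 ≤ Cb := by rw [hCbdef]; positivity
    have I1 : ∀ η : Fin n → α,
        ∫ a, (G (Fin.cons a η) - EG)^(2*m) ∂P ≤ ((g η - EG)^2 + Cb)^m := by
      intro η
      set r : ℝ := g η - EG with hrdef
      set D : α → ℝ := fun a => G (Fin.cons a η) - g η with hDdef
      have hDm : Measurable D := (hslice_m η).sub measurable_const
      have hDint : Integrable D P := (hslice_int η).sub (integrable_const _)
      have hD0 : ∫ a, D a ∂P = 0 := by
        rw [hDdef]
        rw [integral_sub (hslice_int η) (integrable_const _), integral_const, probReal_univ, one_smul]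
        rw [hgdef]
        ring
      have hDb : ∀ᵐ a ∂P, |D a| ≤ b := by
        filter_upwards [haeP] with a ha
        have hida : D a = ∫ a', (G (Fin.cons a η) - G (Fin.cons a' η)) ∂P := by
          rw [integral_sub (integrable_const _) (hslice_int η), integral_const, probReal_univ, one_smul, hDdef, hgdef]
        rw [hida]
        calc |∫ a', (G (Fin.cons a η) - G (Fin.cons a' η)) ∂P|
            ≤ ∫ a', |G (Fin.cons a η) - G (Fin.cons a' η)| ∂P := by
              simpa [Real.norm_eq_abs] using
                norm_integral_le_integral_norm (fun a' => G (Fin.cons a η) - G (Fin.cons a' η))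
          _ ≤ ∫ _a', b ∂P := by
              refine integral_mono_ae ((integrable_const _).sub (hslice_int η)).abs
                (integrable_const _) ?_
              filter_upwards [haeP] with a' ha'
              have h := hGlip (Fin.cons a η) 0 a'
              rw [Fin.update_cons_zero, Fin.cons_zero] at h
              have hd : dist a a' ≤ 2 := hSd _ ha _ ha'
              calc |G (Fin.cons a η) - G (Fin.cons a' η)| ≤ c * dist a a' := h
                _ ≤ b := by rw [hbdef]; nlinarith
          _ = b := by rw [integral_const, probReal_univ, one_smul]
      have hDpow_int : ∀ i : ℕ, Integrable (fun a => D a ^ i) P := by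
        intro i
        refine integrable_of_ae_bound (B := b^i) (hDm.pow_const i).aestronglyMeasurable ?_
        filter_upwards [hDb] with a ha
        rw [abs_pow]
        exact pow_le_pow_left₀ (abs_nonneg _) ha i
      have hexp : ∀ a : α, (G (Fin.cons a η) - EG)^(2*m)
          = ∑ i ∈ Finset.range (2*m+1), D a^i * r^(2*m - i) * ((2*m).choose i : ℝ) := by
        intro a
        have h : G (Fin.cons a η) - EG = D a + r := by rw [hDdef, hrdef]; ring
        rw [h, add_pow]
      have hI : ∫ a, (G (Fin.cons a η) - EG)^(2*m) ∂P
          = ∑ i ∈ Finset.range (2*m+1),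
              (∫ a, D a^i ∂P) * r^(2*m-i) * ((2*m).choose i : ℝ) := by
        simp_rw [hexp]
        rw [integral_finset_sum _ (fun i _ => ((hDpow_int i).mul_const _).mul_const _)]
        refine Finset.sum_congr rfl fun i _ => ?_
        rw [integral_mul_const, integral_mul_const]
      rw [hI]
      have hsplit : Finset.range (2*m+1) = Finset.range 2 ∪ Finset.Icc 2 (2*m) := by
        ext i; simp only [Finset.mem_range, Finset.mem_Icc, Finset.mem_union]; omega
      have hdisj : Disjoint (Finset.range 2) (Finset.Icc 2 (2*m)) := by
        rw [Finset.disjoint_left]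
        intro i hi hi2
        simp only [Finset.mem_range] at hi
        simp only [Finset.mem_Icc] at hi2
        omega
      rw [hsplit, Finset.sum_union hdisj]
      have hone : ∫ (_ : α), (1:ℝ) ∂P = 1 := by
        rw [integral_const, probReal_univ, one_smul]
      have hrange2 : ∑ i ∈ Finset.range 2,
          (∫ a, D a^i ∂P) * r^(2*m-i) * ((2*m).choose i : ℝ) = r^(2*m) := by
        rw [Finset.sum_range_succ, Finset.sum_range_one]
        simp only [pow_zero, pow_one, hD0, zero_mul, add_zero, Nat.choose_zero_right,
          Nat.cast_one, mul_one, Nat.sub_zero]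
        rw [hone]
        ring
      have hIccbound : ∑ i ∈ Finset.Icc 2 (2*m),
          (∫ a, D a^i ∂P) * r^(2*m-i) * ((2*m).choose i : ℝ)
          ≤ ∑ i ∈ Finset.Icc 2 (2*m), ((2*m).choose i : ℝ) * (|r|^(2*m-i) * b^i) := by
        refine Finset.sum_le_sum fun i hi => ?_
        have h1 : |∫ a, D a^i ∂P| ≤ b^i := by
          calc |∫ a, D a ^ i ∂P| ≤ ∫ a, |D a ^ i| ∂P := by
                simpa [Real.norm_eq_abs] using norm_integral_le_integral_norm (fun a => D a ^ i)
            _ ≤ ∫ _a, b^i ∂P := by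
                refine integral_mono_ae (hDpow_int i).abs (integrable_const _) ?_
                filter_upwards [hDb] with a ha
                rw [abs_pow]
                exact pow_le_pow_left₀ (abs_nonneg _) ha i
            _ = b^i := by rw [integral_const, probReal_univ, one_smul]
        calc (∫ a, D a^i ∂P) * r^(2*m-i) * ((2*m).choose i : ℝ)
            ≤ |(∫ a, D a^i ∂P) * r^(2*m-i) * ((2*m).choose i : ℝ)| := le_abs_self _
          _ = |∫ a, D a^i ∂P| * |r|^(2*m-i) * ((2*m).choose i : ℝ) := by
              rw [abs_mul, abs_mul, abs_pow, abs_of_nonneg (by positivity : (0:ℝ) ≤ ((2*m).choose i : ℝ))]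
          _ ≤ b^i * |r|^(2*m-i) * ((2*m).choose i : ℝ) := by
              have := mul_le_mul_of_nonneg_right h1 (pow_nonneg (abs_nonneg r) (2*m-i))
              exact mul_le_mul_of_nonneg_right this (by positivity)
          _ = ((2*m).choose i : ℝ) * (|r|^(2*m-i) * b^i) := by ring
      have halg := alg_main (r := r) (b := b) hb hm1 hmK
      have hevn : r^(2*m) = |r|^(2*m) := (Even.pow_abs ⟨m, by ring⟩ r).symm
      rw [hrange2, hevn, hCbdef]
      linarith [halg, hIccbound]
    have hFm : Measurable (fun p : α × (Fin n → α) => (G₂ p - EG)^(2*m)) :=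
      (hG₂m.sub measurable_const).pow_const _
    have habssub : ∀ u v : ℝ, |u| ≤ B → |u - v| ≤ B + |v| := by
      intro u v hu
      calc |u - v| ≤ |u| + |v| := abs_sub _ _
        _ ≤ B + |v| := by linarith
    have hFint : Integrable (fun p => (G₂ p - EG)^(2*m)) (P.prod ν) := by
      refine integrable_of_ae_bound (B := (B + |EG|)^(2*m)) hFm.aestronglyMeasurable ?_
      filter_upwards [hG₂ae] with p hp
      rw [abs_pow]
      exact pow_le_pow_left₀ (abs_nonneg _) (habssub _ _ hp) _
    have main_eq : ∫ ξ, |G ξ - EG|^(2*m) ∂Pn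
        = ∫ η, (∫ a, (G (Fin.cons a η) - EG)^(2*m) ∂P) ∂ν := by
      have e1 : (fun ξ : Fin (n+1) → α => |G ξ - EG|^(2*m))
          = fun ξ => (G ξ - EG)^(2*m) := funext fun ξ => Even.pow_abs ⟨m, by ring⟩ _
      rw [e1, key_int (fun ξ => (G ξ - EG)^(2*m))]
      exact integral_prod_symm _ hFint
    have hone : ∫ (_ : α), (1:ℝ) ∂P = 1 := by
      rw [integral_const, probReal_univ, one_smul]
    have hgae : ∀ᵐ η ∂ν, |g η| ≤ B := by
      filter_upwards [haeν] with η hη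
      calc |g η| ≤ ∫ a, |G (Fin.cons a η)| ∂P := by
            simpa [Real.norm_eq_abs] using
              norm_integral_le_integral_norm (fun a => G (Fin.cons a η))
        _ ≤ ∫ _a, B ∂P := by
            refine integral_mono_ae (hslice_int η).abs (integrable_const _) ?_
            filter_upwards [haeP] with a ha
            exact hG_bnd _ (hconsS a η ha hη)
        _ = B := by rw [integral_const, probReal_univ, one_smul]
    have hinner_int : Integrable (fun η => ∫ a, (G (Fin.cons a η) - EG)^(2*m) ∂P) ν :=
      hFint.integral_prod_right
    have hpow_eta_int : ∀ i : ℕ, Integrable (fun η => ((g η - EG)^2)^i) ν := by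
      intro i
      refine integrable_of_ae_bound (B := ((B + |EG|)^2)^i)
        (((hgm.sub measurable_const).pow_const 2).pow_const i).aestronglyMeasurable ?_
      filter_upwards [hgae] with η hη
      rw [abs_pow]
      refine pow_le_pow_left₀ (abs_nonneg _) ?_ _
      calc |(g η - EG)^2| = |g η - EG|^2 := by rw [abs_pow]
        _ ≤ (B + |EG|)^2 := pow_le_pow_left₀ (abs_nonneg _) (habssub _ _ hη) 2
    have hRHS_int : Integrable (fun η => ((g η - EG)^2 + Cb)^m) ν := by
      refine integrable_of_ae_bound (B := ((B + |EG|)^2 + Cb)^m)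
        ((((hgm.sub measurable_const).pow_const 2).add_const Cb).pow_const m).aestronglyMeasurable ?_
      filter_upwards [hgae] with η hη
      rw [abs_pow]
      refine pow_le_pow_left₀ (abs_nonneg _) ?_ _
      have h1 : (g η - EG)^2 ≤ (B + |EG|)^2 := by
        have := habssub _ EG hη
        calc (g η - EG)^2 = |g η - EG|^2 := (sq_abs _).symm
          _ ≤ (B + |EG|)^2 := pow_le_pow_left₀ (abs_nonneg _) this 2
      calc |(g η - EG)^2 + Cb| = (g η - EG)^2 + Cb := abs_of_nonneg (by positivity)
        _ ≤ (B + |EG|)^2 + Cb := by linarith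
    have step1 : ∫ η, (∫ a, (G (Fin.cons a η) - EG)^(2*m) ∂P) ∂ν
        ≤ ∫ η, ((g η - EG)^2 + Cb)^m ∂ν :=
      integral_mono hinner_int hRHS_int I1
    have expand : ∫ η, ((g η - EG)^2 + Cb)^m ∂ν
        = ∑ i ∈ Finset.range (m+1),
            (∫ η, ((g η - EG)^2)^i ∂ν) * Cb^(m-i) * (m.choose i : ℝ) := by
      simp_rw [add_pow]
      rw [integral_finset_sum _ (fun i _ => ((hpow_eta_int i).mul_const _).mul_const _)]
      refine Finset.sum_congr rfl fun i _ => by rw [integral_mul_const, integral_mul_const]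
    have hIH2 : ∀ i, i ≤ m → ∫ η, ((g η - EG)^2)^i ∂ν ≤ (8^Kk * ((n:ℝ) * b^2))^i := by
      intro i him
      have h := IH g hgm hglip i (le_trans him hmK)
      rw [← hEGg] at h
      have e : (fun η => ((g η - EG)^2)^i) = fun η => |g η - EG|^(2*i) := by
        funext η
        rw [← pow_mul]
        exact (Even.pow_abs ⟨i, by ring⟩ _).symm
      rw [e]
      exact h
    have sum_le : ∑ i ∈ Finset.range (m+1),
          (∫ η, ((g η - EG)^2)^i ∂ν) * Cb^(m-i) * (m.choose i : ℝ)
        ≤ ∑ i ∈ Finset.range (m+1),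
            (8^Kk * ((n:ℝ) * b^2))^i * Cb^(m-i) * (m.choose i : ℝ) := by
      refine Finset.sum_le_sum fun i hi => ?_
      have him : i ≤ m := by
        simp only [Finset.mem_range] at hi; omega
      have h := hIH2 i him
      have hnn : (0:ℝ) ≤ Cb^(m-i) * (m.choose i : ℝ) := by positivity
      rw [mul_assoc, mul_assoc]
      exact mul_le_mul_of_nonneg_right h hnn
    have hadd : ∑ i ∈ Finset.range (m+1),
        (8^Kk * ((n:ℝ) * b^2))^i * Cb^(m-i) * (m.choose i : ℝ)
        = (8^Kk * ((n:ℝ) * b^2) + Cb)^m := (add_pow _ _ m).symm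
    have hfinal : (8^Kk * ((n:ℝ) * b^2) + Cb) = 8^Kk * (((n:ℕ)+1 : ℝ) * b^2) := by
      rw [hCbdef]; push_cast; ring
    have hcast : (((n:ℕ)+1 : ℕ) : ℝ) = ((n:ℕ)+1 : ℝ) := by push_cast; ring
    calc ∫ ξ, |G ξ - EG|^(2*m) ∂Pn
        = ∫ η, (∫ a, (G (Fin.cons a η) - EG)^(2*m) ∂P) ∂ν := main_eq
      _ ≤ ∫ η, ((g η - EG)^2 + Cb)^m ∂ν := step1
      _ = ∑ i ∈ Finset.range (m+1),
            (∫ η, ((g η - EG)^2)^i ∂ν) * Cb^(m-i) * (m.choose i : ℝ) := expand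
      _ ≤ ∑ i ∈ Finset.range (m+1),
            (8^Kk * ((n:ℝ) * b^2))^i * Cb^(m-i) * (m.choose i : ℝ) := sum_le
      _ = (8^Kk * ((n:ℝ) * b^2) + Cb)^m := hadd
      _ = (8^Kk * ((((n:ℕ)+1 : ℕ)) * b^2 : ℝ))^m := by rw [hfinal, hcast]

end MZ


abbrev Evec (d : ℕ) := EuclideanSpace ℝ (Fin d)

variable {d : ℕ}

instance liptype_nonempty {α : Type*} [PseudoMetricSpace α] :
    Nonempty {g : α → ℝ // LipschitzWith 1 g} :=
  ⟨⟨fun _ => 0, (LipschitzWith.const 0).weaken zero_le_one⟩⟩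



def emp {d n : ℕ} (y : Fin n → Evec d) : Measure (Evec d) :=
  (n : ENNReal)⁻¹ • ∑ i : Fin n, Measure.dirac (y i)

lemma integrable_dirac_sm {f : Evec d → ℝ} (hf : StronglyMeasurable f) (a : Evec d) :
    Integrable f (Measure.dirac a) := by
  refine ⟨hf.aestronglyMeasurable, ?_⟩
  simp [HasFiniteIntegral, lintegral_dirac]

lemma integral_emp {n : ℕ} (y : Fin n → Evec d) {f : Evec d → ℝ} (hf : StronglyMeasurable f) :
    ∫ z, f z ∂(emp y) = (n : ℝ)⁻¹ * ∑ i, f (y i) := by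
  rw [emp, integral_smul_measure,
    integral_finset_sum_measure (fun i _ => integrable_dirac_sm hf (y i))]
  simp only [integral_dirac]
  rw [smul_eq_mul, ENNReal.toReal_inv, ENNReal.toReal_natCast]

lemma emp_prob {n : ℕ} (hn : 1 ≤ n) (y : Fin n → Evec d) : IsProbabilityMeasure (emp y) := by
  constructor
  rw [emp]
  simp only [Measure.smul_apply, Measure.coe_finset_sum, Finset.sum_apply, smul_eq_mul]
  have hd : ∀ i : Fin n, Measure.dirac (y i) (univ : Set (Evec d)) = 1 := fun i => by simp
  rw [Finset.sum_congr rfl fun i _ => hd i, Finset.sum_const, Finset.card_univ,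
    Fintype.card_fin, nsmul_eq_mul, mul_one]
  exact ENNReal.inv_mul_cancel (Nat.cast_ne_zero.2 (by omega)) (by simp)

variable {μ : Measure (Evec d)} [IsProbabilityMeasure μ] {R : ℝ}

lemma lip_sm {g : Evec d → ℝ} (hg : LipschitzWith 1 g) : StronglyMeasurable g :=
  hg.continuous.stronglyMeasurable

lemma lip_abs_sub {g : Evec d → ℝ} (hg : LipschitzWith 1 g) (a b : Evec d) :
    |g a - g b| ≤ dist a b := by
  rw [← Real.dist_eq]
  simpa using hg.dist_le_mul a b

lemma lip_integrable {g : Evec d → ℝ} (hg : LipschitzWith 1 g) (hR : ∀ᵐ z ∂μ, ‖z‖ ≤ R) :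
    Integrable (fun z => g z - g 0) μ := by
  refine integrable_of_ae_bound (B := R) ((lip_sm hg).sub stronglyMeasurable_const).aestronglyMeasurable ?_
  filter_upwards [hR] with z hz
  calc |g z - g 0| ≤ dist z 0 := lip_abs_sub hg z 0
    _ ≤ R := by rwa [dist_zero_right]

lemma term_le {n : ℕ} (hn : 1 ≤ n) (y : Fin n → Evec d) (hR : ∀ᵐ z ∂μ, ‖z‖ ≤ R)
    {g : Evec d → ℝ} (hg : LipschitzWith 1 g) :
    ∫ z, g z ∂(emp y) - ∫ z, g z ∂μ ≤ (n:ℝ)⁻¹ * ∑ i, ‖y i‖ + R := by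
  haveI := emp_prob hn y
  have hsub : ∀ (ν : Measure (Evec d)), IsProbabilityMeasure ν → Integrable (fun z => g z - g 0) ν →
      ∫ z, g z ∂ν - ∫ z, g z ∂μ
        = ∫ z, (g z - g 0) ∂ν - ∫ z, (g z - g 0) ∂μ := by
    intro ν hν hint
    have key : ∀ (ρ : Measure (Evec d)), IsProbabilityMeasure ρ →
        Integrable (fun z => g z - g 0) ρ →
        ∫ z, g z ∂ρ = ∫ z, (g z - g 0) ∂ρ + g 0 := by
      intro ρ hρ hintρ
      have h := integral_add hintρ (integrable_const (g 0))
      simp only [sub_add_cancel] at h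
      rw [h, integral_const, probReal_univ, one_smul]
    rw [key ν hν hint, key μ inferInstance (lip_integrable hg hR)]
    ring
  have hint_emp : Integrable (fun z => g z - g 0) (emp y) := by
    refine ⟨((lip_sm hg).sub stronglyMeasurable_const).aestronglyMeasurable, ?_⟩
    rw [emp]
    simp only [HasFiniteIntegral]
    rw [lintegral_smul_measure, lintegral_finset_sum_measure]
    simp only [lintegral_dirac]
    exact ENNReal.mul_lt_top (by simp; omega) (by
      exact (ENNReal.sum_lt_top).2 fun i _ => ENNReal.coe_lt_top)
  rw [hsub (emp y) (emp_prob hn y) hint_emp]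
  have h1 : ∫ z, (g z - g 0) ∂(emp y) ≤ (n:ℝ)⁻¹ * ∑ i, ‖y i‖ := by
    rw [integral_emp (f := fun z => g z - g 0) y ((lip_sm hg).sub stronglyMeasurable_const)]
    refine mul_le_mul_of_nonneg_left (Finset.sum_le_sum fun i _ => ?_) (by positivity)
    calc g (y i) - g 0 ≤ |g (y i) - g 0| := le_abs_self _
      _ ≤ dist (y i) 0 := lip_abs_sub hg _ _
      _ = ‖y i‖ := dist_zero_right _
  have h2 : -(∫ z, (g z - g 0) ∂μ) ≤ R := by
    rw [← integral_neg]
    calc ∫ z, -(g z - g 0) ∂μ ≤ ∫ z, R ∂μ := by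
          refine integral_mono_ae ((lip_integrable hg hR).neg) (integrable_const _) ?_
          filter_upwards [hR] with z hz
          calc -(g z - g 0) ≤ |g z - g 0| := neg_le_abs _
            _ ≤ dist z 0 := lip_abs_sub hg z 0
            _ ≤ R := by rwa [dist_zero_right]
      _ = R := by simp
  linarith

lemma bddAbove_kant {n : ℕ} (hn : 1 ≤ n) (y : Fin n → Evec d) (hR : ∀ᵐ z ∂μ, ‖z‖ ≤ R) :
    BddAbove (Set.range fun g : {g : Evec d → ℝ // LipschitzWith 1 g} =>
      ∫ z, g.1 z ∂(emp y) - ∫ z, g.1 z ∂μ) := by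
  refine ⟨(n:ℝ)⁻¹ * ∑ i, ‖y i‖ + R, ?_⟩
  rintro x ⟨g, rfl⟩
  exact term_le hn y hR g.2

lemma kant_nonneg {n : ℕ} (hn : 1 ≤ n) (y : Fin n → Evec d) (hR : ∀ᵐ z ∂μ, ‖z‖ ≤ R) :
    0 ≤ kantorovich (emp y) μ := by
  have h := le_ciSup (bddAbove_kant hn y hR)
    (⟨fun _ => 0, (LipschitzWith.const 0).weaken zero_le_one⟩ : {g : Evec d → ℝ // LipschitzWith 1 g})
  simpa [kantorovich] using h

lemma kant_le_bound {n : ℕ} (hn : 1 ≤ n) (y : Fin n → Evec d) (hR : ∀ᵐ z ∂μ, ‖z‖ ≤ R) :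
    kantorovich (emp y) μ ≤ (n:ℝ)⁻¹ * ∑ i, ‖y i‖ + R :=
  ciSup_le fun g => term_le hn y hR g.2

lemma kant_compare {n : ℕ} (hn : 1 ≤ n) (y y' : Fin n → Evec d) (hR : ∀ᵐ z ∂μ, ‖z‖ ≤ R) :
    kantorovich (emp y) μ ≤ kantorovich (emp y') μ + (n:ℝ)⁻¹ * ∑ i, dist (y i) (y' i) := by
  refine ciSup_le fun g => ?_
  have key : ∫ z, g.1 z ∂(emp y) - ∫ z, g.1 z ∂μ
      ≤ (∫ z, g.1 z ∂(emp y') - ∫ z, g.1 z ∂μ) + (n:ℝ)⁻¹ * ∑ i, dist (y i) (y' i) := by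
    have h1 : ∫ z, g.1 z ∂(emp y) - ∫ z, g.1 z ∂(emp y')
        = (n:ℝ)⁻¹ * ∑ i, (g.1 (y i) - g.1 (y' i)) := by
      rw [integral_emp y (lip_sm g.2), integral_emp y' (lip_sm g.2), ← mul_sub,
        ← Finset.sum_sub_distrib]
    have h2 : (n:ℝ)⁻¹ * ∑ i, (g.1 (y i) - g.1 (y' i)) ≤ (n:ℝ)⁻¹ * ∑ i, dist (y i) (y' i) := by
      refine mul_le_mul_of_nonneg_left (Finset.sum_le_sum fun i _ => ?_) (by positivity)
      calc g.1 (y i) - g.1 (y' i) ≤ |g.1 (y i) - g.1 (y' i)| := le_abs_self _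
        _ ≤ dist (y i) (y' i) := lip_abs_sub g.2 _ _
    linarith
  calc ∫ z, g.1 z ∂(emp y) - ∫ z, g.1 z ∂μ
      ≤ (∫ z, g.1 z ∂(emp y') - ∫ z, g.1 z ∂μ) + (n:ℝ)⁻¹ * ∑ i, dist (y i) (y' i) := key
    _ ≤ kantorovich (emp y') μ + (n:ℝ)⁻¹ * ∑ i, dist (y i) (y' i) := by
        refine add_le_add_left (le_ciSup (bddAbove_kant hn y' hR) g) _

lemma kant_seplip {n : ℕ} (hn : 1 ≤ n) (y : Fin n → Evec d) (j : Fin n) (w : Evec d)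
    (hR : ∀ᵐ z ∂μ, ‖z‖ ≤ R) :
    |kantorovich (emp y) μ - kantorovich (emp (Function.update y j w)) μ|
      ≤ (n:ℝ)⁻¹ * dist (y j) w := by
  have hsum : ∀ y' : Fin n → Evec d, ∀ v : Evec d,
      (∑ i, dist (y' i) (Function.update y' j v i)) = dist (y' j) v := by
    intro y' v
    rw [Finset.sum_eq_single_of_mem j (Finset.mem_univ j)]
    · rw [Function.update_self]
    · intro i _ hij; rw [Function.update_of_ne hij]; simp
  have h1 := kant_compare hn y (Function.update y j w) hR
  have h2 := kant_compare hn (Function.update y j w) y hR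
  rw [hsum y w] at h1
  have e : Function.update (Function.update y j w) j (y j) = y := by
    ext i; by_cases hij : i = j
    · subst hij; rw [Function.update_self]
    · rw [Function.update_of_ne hij, Function.update_of_ne hij]
  have h2' : kantorovich (emp (Function.update y j w)) μ
      ≤ kantorovich (emp y) μ + (n:ℝ)⁻¹ * dist (y j) w := by
    have := kant_compare hn (Function.update y j w) y hR
    have e2 : (∑ i, dist (Function.update y j w i) (y i)) = dist (y j) w := by
      have := hsum (Function.update y j w) (y j)
      rw [e] at this
      rw [this, Function.update_self, dist_comm]
    rwa [e2] at this
  rw [abs_sub_le_iff]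
  constructor <;> linarith

lemma kant_lip {n : ℕ} (hn : 1 ≤ n) (hR : ∀ᵐ z ∂μ, ‖z‖ ≤ R) :
    LipschitzWith 1 (fun y : Fin n → Evec d => kantorovich (emp y) μ) := by
  refine LipschitzWith.of_dist_le_mul fun y y' => ?_
  rw [Real.dist_eq, NNReal.coe_one, one_mul]
  have hb : ∀ z z' : Fin n → Evec d,
      kantorovich (emp z) μ ≤ kantorovich (emp z') μ + dist z z' := by
    intro z z'
    have h := kant_compare hn z z' hR
    have h2 : (n:ℝ)⁻¹ * ∑ i, dist (z i) (z' i) ≤ dist z z' := by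
      have hsum : (∑ i, dist (z i) (z' i)) ≤ n * dist z z' := by
        calc (∑ i, dist (z i) (z' i)) ≤ ∑ _i : Fin n, dist z z' :=
              Finset.sum_le_sum fun i _ => dist_le_pi_dist z z' i
          _ = n * dist z z' := by rw [Finset.sum_const, Finset.card_univ, Fintype.card_fin,
              nsmul_eq_mul]
      calc (n:ℝ)⁻¹ * ∑ i, dist (z i) (z' i) ≤ (n:ℝ)⁻¹ * (n * dist z z') := by
            refine mul_le_mul_of_nonneg_left hsum (by positivity)
        _ = dist z z' := by
            rw [← mul_assoc, inv_mul_cancel₀ (Nat.cast_ne_zero.2 (by omega)), one_mul]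
      
    linarith
  rw [abs_sub_le_iff]
  exact ⟨by linarith [hb y y'], by linarith [hb y' y, dist_comm y y']⟩

/-- Jensen dodge: from a `2k`-moment bound to a `q`-moment bound, `q ≤ 2k`. -/
lemma moment_interp {Ω : Type*} [MeasurableSpace Ω] {μ : Measure Ω} [IsProbabilityMeasure μ]
    {W : Ω → ℝ} (hW0 : ∀ ω, 0 ≤ W ω) {k : ℕ} {q : ℝ} (hq0 : 0 < q) (hq2k : q ≤ 2*k)
    {β : ℝ} (hβ : 0 < β) (hmom : ∫ ω, W ω ^ (2*k) ∂μ ≤ β)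
    (hiq : Integrable (fun ω => W ω ^ q) μ) (hik : Integrable (fun ω => W ω ^ (2*k)) μ) :
    ∫ ω, W ω ^ q ∂μ ≤ 2 * β ^ (q / (2*(k:ℝ))) := by
  set lam : ℝ := β ^ (1 / (2*(k:ℝ))) with hlam
  have hk0 : 0 < (k:ℝ) := by
    rcases Nat.eq_zero_or_pos k with h | h
    · exfalso; rw [h] at hq2k; push_cast at hq2k; linarith
    · exact_mod_cast h
  have hlam0 : 0 < lam := Real.rpow_pos_of_pos hβ _
  have hpt : ∀ ω, W ω ^ q ≤ lam ^ q + lam ^ (q - 2*(k:ℝ)) * W ω ^ (2*k) := by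
    intro ω
    rcases le_or_gt (W ω) lam with h | h
    · have h1 : W ω ^ q ≤ lam ^ q := Real.rpow_le_rpow (hW0 ω) h hq0.le
      have h2 : 0 ≤ lam ^ (q - 2*(k:ℝ)) * W ω ^ (2*k) :=
        mul_nonneg (Real.rpow_nonneg hlam0.le _) (pow_nonneg (hW0 ω) _)
      linarith
    · have hWpos : 0 < W ω := lt_trans hlam0 h
      have e1 : W ω ^ q = W ω ^ ((2*(k:ℝ)) + (q - 2*(k:ℝ))) := by norm_num
      have e2 : W ω ^ ((2*(k:ℝ)) + (q - 2*(k:ℝ))) = W ω ^ (2*(k:ℝ)) * W ω ^ (q - 2*(k:ℝ)) :=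
        Real.rpow_add hWpos _ _
      have e3 : W ω ^ (2*(k:ℝ)) = W ω ^ (2*k) := by
        rw [show (2*(k:ℝ)) = ((2*k : ℕ) : ℝ) by push_cast; ring, Real.rpow_natCast]
      have h4 : W ω ^ (q - 2*(k:ℝ)) ≤ lam ^ (q - 2*(k:ℝ)) :=
        Real.rpow_le_rpow_of_nonpos hlam0 h.le (by linarith)
      calc W ω ^ q = W ω ^ (2*k) * W ω ^ (q - 2*(k:ℝ)) := by rw [e1, e2, e3]
        _ ≤ W ω ^ (2*k) * lam ^ (q - 2*(k:ℝ)) :=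
            mul_le_mul_of_nonneg_left h4 (by positivity)
        _ ≤ lam ^ q + lam ^ (q - 2*(k:ℝ)) * W ω ^ (2*k) := by
            have : 0 ≤ lam ^ q := by positivity
            linarith [mul_comm (W ω ^ (2*k)) (lam ^ (q - 2*(k:ℝ)))]
  have hint : ∫ ω, W ω ^ q ∂μ ≤ lam ^ q + lam ^ (q - 2*(k:ℝ)) * β := by
    have h1 : ∫ ω, W ω ^ q ∂μ
        ≤ ∫ ω, (lam ^ q + lam ^ (q - 2*(k:ℝ)) * W ω ^ (2*k)) ∂μ :=
      integral_mono hiq ((integrable_const _).add (hik.const_mul _)) hpt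
    rw [integral_add (integrable_const _) (hik.const_mul _), integral_const, probReal_univ, one_smul, integral_const_mul] at h1
    have h2 : lam ^ (q - 2*(k:ℝ)) * ∫ ω, W ω ^ (2*k) ∂μ ≤ lam ^ (q - 2*(k:ℝ)) * β :=
      mul_le_mul_of_nonneg_left hmom (by positivity)
    linarith
  have heq : lam ^ q + lam ^ (q - 2*(k:ℝ)) * β = 2 * β ^ (q / (2*(k:ℝ))) := by
    have e1 : ∀ z : ℝ, lam ^ z = β ^ (z / (2*(k:ℝ))) := by
      intro z
      rw [hlam, ← Real.rpow_mul hβ.le]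
      congr 1
      field_simp
    rw [e1, e1]
    have e2 : β ^ ((q - 2*(k:ℝ)) / (2*(k:ℝ))) * β = β ^ (q / (2*(k:ℝ))) := by
      nth_rewrite 2 [show β = β ^ (1:ℝ) by rw [Real.rpow_one]]
      rw [← Real.rpow_add hβ]
      congr 1
      field_simp
      ring
    rw [e2]
    ring
  linarith

lemma rpow_add_le_two_rpow {a b q : ℝ} (ha : 0 ≤ a) (hb : 0 ≤ b) (hq : 1 ≤ q) :
    (a + b) ^ q ≤ 2 ^ (q - 1) * (a ^ q + b ^ q) := by
  have hcvx := (convexOn_rpow hq).2 (mem_Ici.2 ha) (mem_Ici.2 hb)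
    (by norm_num : (0:ℝ) ≤ (1:ℝ)/2) (by norm_num : (0:ℝ) ≤ (1:ℝ)/2) (by norm_num)
  simp only [smul_eq_mul] at hcvx
  have e1 : (1:ℝ)/2 * a + 1/2 * b = (a+b)/2 := by ring
  rw [e1] at hcvx
  have e2 : (a + b) ^ q = 2 ^ q * ((a+b)/2) ^ q := by
    rw [← Real.mul_rpow (by norm_num) (by positivity)]
    congr 1
    ring
  rw [e2]
  have h3 : (2:ℝ) ^ q * ((a+b)/2) ^ q ≤ 2 ^ q * (1/2 * a ^ q + 1/2 * b ^ q) :=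
    mul_le_mul_of_nonneg_left hcvx (by positivity)
  have e4 : (2:ℝ) ^ q * (1/2 * a ^ q + 1/2 * b ^ q) = 2 ^ (q-1) * (a ^ q + b ^ q) := by
    rw [Real.rpow_sub (by norm_num : (0:ℝ) < 2), Real.rpow_one]
    ring
  linarith [e4 ▸ h3]


end Obs

section Main


set_option maxHeartbeats 2000000 in
/-- Fluctuation bound for the Kantorovich distance between the observed empirical
measure and `μ`, for a system satisfying the polynomial concentration inequality
with moment `q ≥ 2`. -/
theorem observed_empirical_measure_polynomial {d : ℕ}
    (X : Set (EuclideanSpace ℝ (Fin d))) (hX : IsCompact X)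
    (T : EuclideanSpace ℝ (Fin d) → EuclideanSpace ℝ (Fin d))
    (hT : Measurable T) (hTX : Set.MapsTo T X X)
    (μ : Measure (EuclideanSpace ℝ (Fin d))) [IsProbabilityMeasure μ]
    (hμX : μ X = 1) (hinv : μ.map T = μ)
    (q : ℝ) (hq : 2 ≤ q) (Cq : ℝ) (hCq : 0 < Cq)
    (hconc : ∀ (n : ℕ), 1 ≤ n → ∀ (K : (Fin n → EuclideanSpace ℝ (Fin d)) → ℝ)
      (L : Fin n → ℝ), SepLip K L →
      ∫ x, |K (fun i => T^[(i : ℕ)] x)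
          - ∫ z, K (fun i => T^[(i : ℕ)] z) ∂μ| ^ q ∂μ
        ≤ Cq * (∑ j, L j ^ 2) ^ (q / 2))
    (P : Measure (EuclideanSpace ℝ (Fin d))) [IsProbabilityMeasure P]
    (hP : ∀ᵐ ξ ∂P, ‖ξ‖ ≤ 1) :
    ∃ Dq : ℝ, 0 < Dq ∧ ∀ ε : ℝ, 0 < ε → ∀ (n : ℕ), 1 ≤ n → ∀ t : ℝ, 0 < t →
      ((μ.prod (Measure.pi fun _ : Fin n => P))
          {p | t + (∫ p', kantorovich (obsEmpirical T ε p') μ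
                ∂(μ.prod (Measure.pi fun _ : Fin n => P)))
            < kantorovich (obsEmpirical T ε p) μ}).toReal
        ≤ (Dq * (1 + ε) ^ q / t ^ q) * ((n : ℝ) ^ (-(q / 2))) := by
  classical
  -- bounding radius for X
  obtain ⟨R0, hR0⟩ := hX.isBounded.subset_closedBall (0 : EuclideanSpace ℝ (Fin d))
  set R : ℝ := max R0 0 with hRdef
  have hRX : X ⊆ Metric.closedBall 0 R :=
    hR0.trans (Metric.closedBall_subset_closedBall (le_max_left _ _))
  have hRnn : 0 ≤ R := le_max_right _ _
  have hXm : MeasurableSet X := hX.isClosed.measurableSet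
  have haeX : ∀ᵐ x ∂μ, x ∈ X := Obs.ae_mem_of_prob_one hXm hμX
  have hRμ : ∀ᵐ z ∂μ, ‖z‖ ≤ R := by
    filter_upwards [haeX] with z hz
    have := hRX hz
    rwa [Metric.mem_closedBall, dist_zero_right] at this
  have hnormX : ∀ x ∈ X, ‖x‖ ≤ R := by
    intro x hx
    have := hRX hx
    rwa [Metric.mem_closedBall, dist_zero_right] at this
  -- the unit ball for the noise
  set S1 : Set (EuclideanSpace ℝ (Fin d)) := Metric.closedBall 0 1 with hS1def
  have hS1m : MeasurableSet S1 := Metric.isClosed_closedBall.measurableSet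
  have hS1mem : ∀ z : EuclideanSpace ℝ (Fin d), z ∈ S1 ↔ ‖z‖ ≤ 1 := by
    intro z; rw [hS1def, Metric.mem_closedBall, dist_zero_right]
  have hPS1 : P S1 = 1 := by
    rw [← prob_compl_eq_zero_iff hS1m]
    rw [ae_iff] at hP
    have : S1ᶜ = {ξ | ¬ ‖ξ‖ ≤ 1} := by
      ext z; simp [hS1mem z]
    rw [this]
    exact hP
  have hS1d : ∀ a ∈ S1, ∀ b ∈ S1, dist a b ≤ 2 := by
    intro a ha b hb
    rw [hS1mem] at ha hb
    calc dist a b = ‖a - b‖ := dist_eq_norm a b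
      _ ≤ ‖a‖ + ‖b‖ := norm_sub_le a b
      _ ≤ 2 := by linarith
  -- exponent bookkeeping
  set k : ℕ := ⌈q/2⌉₊ with hkdef
  have hk1 : 1 ≤ k := by
    rw [hkdef, Nat.one_le_ceil_iff]
    linarith
  have hq2k : q ≤ 2*(k:ℝ) := by
    have h := Nat.le_ceil (q/2)
    rw [← hkdef] at h
    linarith
  have hq0 : (0:ℝ) < q := by linarith
  set A : ℝ := 2 * ((8:ℝ)^k * 4) ^ (q/2) with hAdef
  have hA0 : 0 < A := by
    rw [hAdef]
    have : (0:ℝ) < ((8:ℝ)^k * 4) ^ (q/2) := Real.rpow_pos_of_pos (by positivity) _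
    linarith
  refine ⟨(2:ℝ)^(q-1) * (A + Cq), by positivity, ?_⟩
  intro ε hε n hn t ht
  have hn0 : ((n:ℝ)) ≠ 0 := Nat.cast_ne_zero.2 (by omega)
  have hn1 : (1:ℝ) ≤ (n:ℝ) := by exact_mod_cast hn
  have hnpos : (0:ℝ) < (n:ℝ) := by linarith
  set ν : Measure (Fin n → EuclideanSpace ℝ (Fin d)) := Measure.pi fun _ : Fin n => P with hνdef
  set ρ : Measure (EuclideanSpace ℝ (Fin d) × (Fin n → EuclideanSpace ℝ (Fin d))) :=
    μ.prod ν with hρdef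
  haveI : IsProbabilityMeasure ν := by rw [hνdef]; infer_instance
  haveI : IsProbabilityMeasure ρ := by rw [hρdef]; infer_instance
  set m : ℝ := ∫ p', kantorovich (obsEmpirical T ε p') μ ∂ρ with hmdef
  -- basic kantorovich facts
  have hΦ0 : ∀ y : Fin n → EuclideanSpace ℝ (Fin d), 0 ≤ kantorovich (Obs.emp y) μ :=
    fun y => Obs.kant_nonneg hn y hRμ
  have hΦle : ∀ y : Fin n → EuclideanSpace ℝ (Fin d),
      kantorovich (Obs.emp y) μ ≤ (n:ℝ)⁻¹ * ∑ i, ‖y i‖ + R :=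
    fun y => Obs.kant_le_bound hn y hRμ
  have hΦlip : LipschitzWith 1 (fun y : Fin n → EuclideanSpace ℝ (Fin d) =>
      kantorovich (Obs.emp y) μ) := Obs.kant_lip hn hRμ
  have hΦcont := hΦlip.continuous
  -- pointwise bound for shifted tuples
  have hΦv_le : ∀ (v ξ : Fin n → EuclideanSpace ℝ (Fin d)), (∀ i, ‖ξ i‖ ≤ 1) →
      kantorovich (Obs.emp (fun i => v i + ε • ξ i)) μ ≤ (n:ℝ)⁻¹ * (∑ i, ‖v i‖) + ε + R := by
    intro v ξ hξ
    refine (hΦle _).trans ?_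
    have h1 : (∑ i, ‖v i + ε • ξ i‖) ≤ (∑ i, ‖v i‖) + (n:ℝ) * ε := by
      calc (∑ i, ‖v i + ε • ξ i‖) ≤ ∑ i, (‖v i‖ + ε) := by
            refine Finset.sum_le_sum fun i _ => ?_
            calc ‖v i + ε • ξ i‖ ≤ ‖v i‖ + ‖ε • ξ i‖ := norm_add_le _ _
              _ = ‖v i‖ + |ε| * ‖ξ i‖ := by rw [norm_smul, Real.norm_eq_abs]
              _ ≤ ‖v i‖ + ε := by
                  have : |ε| = ε := abs_of_pos hε
                  rw [this]
                  nlinarith [hξ i, norm_nonneg (ξ i)]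
        _ = (∑ i, ‖v i‖) + (n:ℝ) * ε := by
            rw [Finset.sum_add_distrib, Finset.sum_const, Finset.card_univ, Fintype.card_fin,
              nsmul_eq_mul]
    have h2 : (n:ℝ)⁻¹ * (∑ i, ‖v i + ε • ξ i‖) ≤ (n:ℝ)⁻¹ * ((∑ i, ‖v i‖) + (n:ℝ) * ε) :=
      mul_le_mul_of_nonneg_left h1 (by positivity)
    have h3 : (n:ℝ)⁻¹ * ((∑ i, ‖v i‖) + (n:ℝ) * ε) = (n:ℝ)⁻¹ * (∑ i, ‖v i‖) + ε := by
      field_simp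
    linarith
  -- measurability of the trajectory / noise maps
  have htraj : Measurable (fun x : EuclideanSpace ℝ (Fin d) =>
      (fun i : Fin n => T^[(i:ℕ)] x)) :=
    measurable_pi_lambda _ (fun i => hT.iterate (i:ℕ))
  have hYm : Measurable (fun p : EuclideanSpace ℝ (Fin d) × (Fin n → EuclideanSpace ℝ (Fin d)) =>
      (fun i : Fin n => T^[(i:ℕ)] p.1 + ε • p.2 i)) := by
    refine measurable_pi_lambda _ (fun i => ?_)
    exact ((hT.iterate (i:ℕ)).comp measurable_fst).add
      (((measurable_pi_apply i).comp measurable_snd).const_smul ε)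
  have hFm : Measurable (fun p : EuclideanSpace ℝ (Fin d) × (Fin n → EuclideanSpace ℝ (Fin d)) =>
      kantorovich (obsEmpirical T ε p) μ) := by
    have he : (fun p : EuclideanSpace ℝ (Fin d) × (Fin n → EuclideanSpace ℝ (Fin d)) =>
        kantorovich (obsEmpirical T ε p) μ)
        = (fun y => kantorovich (Obs.emp y) μ)
          ∘ (fun p => (fun i : Fin n => T^[(i:ℕ)] p.1 + ε • p.2 i)) := rfl
    rw [he]
    exact hΦcont.measurable.comp hYm
  -- a.e. facts
  have hξae : ∀ᵐ ξ ∂ν, ∀ i, ‖ξ i‖ ≤ 1 := by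
    have h := Obs.ae_pi_mem (P := P) hS1m hPS1 n
    rw [hνdef]
    filter_upwards [h] with ξ hξ i
    exact (hS1mem _).1 (hξ i)
  have hTae : ∀ᵐ x ∂μ, ∀ i : Fin n, T^[(i:ℕ)] x ∈ X := by
    filter_upwards [haeX] with x hx i
    exact hTX.iterate (i:ℕ) hx
  have haeρ : ∀ᵐ p ∂ρ, (∀ i : Fin n, T^[(i:ℕ)] p.1 ∈ X) ∧ (∀ i, ‖p.2 i‖ ≤ 1) := by
    have hAmeas : MeasurableSet (⋂ i : Fin n, (T^[(i:ℕ)]) ⁻¹' X) :=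
      MeasurableSet.iInter fun i => (hT.iterate (i:ℕ)) hXm
    have hAc : μ (⋂ i : Fin n, (T^[(i:ℕ)]) ⁻¹' X)ᶜ = 0 := by
      refine measure_mono_null ?_ ((prob_compl_eq_zero_iff hXm).2 hμX)
      rw [compl_subset_compl]
      intro x hx
      rw [mem_iInter]
      intro i
      exact hTX.iterate (i:ℕ) hx
    have hBc : ν (Set.pi univ fun _ : Fin n => S1)ᶜ = 0 := by
      refine (prob_compl_eq_zero_iff (MeasurableSet.univ_pi fun _ => hS1m)).2 ?_
      rw [hνdef, Measure.pi_pi]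
      simp [hPS1]
    have h := Obs.ae_prod_mem (P := μ) (ν := ν) hAmeas
      (MeasurableSet.univ_pi fun _ : Fin n => hS1m) hAc hBc
    rw [hρdef]
    filter_upwards [h] with p hp
    constructor
    · intro i
      exact mem_iInter.1 hp.1 i
    · intro i
      exact (hS1mem _).1 (hp.2 i trivial)
  -- a.e. bound for F
  have hFb : ∀ᵐ p ∂ρ, |kantorovich (obsEmpirical T ε p) μ| ≤ 2*R + ε := by
    filter_upwards [haeρ] with p hp
    have h0 : 0 ≤ kantorovich (obsEmpirical T ε p) μ := hΦ0 _
    rw [abs_of_nonneg h0]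
    have h1 : kantorovich (obsEmpirical T ε p) μ
        ≤ (n:ℝ)⁻¹ * (∑ i : Fin n, ‖T^[(i:ℕ)] p.1‖) + ε + R := hΦv_le _ _ hp.2
    have h2 : (∑ i : Fin n, ‖T^[(i:ℕ)] p.1‖) ≤ (n:ℝ) * R := by
      calc (∑ i : Fin n, ‖T^[(i:ℕ)] p.1‖) ≤ ∑ _i : Fin n, R :=
            Finset.sum_le_sum fun i _ => hnormX _ (hp.1 i)
        _ = (n:ℝ) * R := by
            rw [Finset.sum_const, Finset.card_univ, Fintype.card_fin, nsmul_eq_mul]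
    have h3 : (n:ℝ)⁻¹ * (∑ i : Fin n, ‖T^[(i:ℕ)] p.1‖) ≤ R := by
      calc (n:ℝ)⁻¹ * (∑ i : Fin n, ‖T^[(i:ℕ)] p.1‖) ≤ (n:ℝ)⁻¹ * ((n:ℝ) * R) :=
            mul_le_mul_of_nonneg_left h2 (by positivity)
        _ = R := by field_simp
    linarith
  have hFint : Integrable (fun p => kantorovich (obsEmpirical T ε p) μ) ρ :=
    Obs.integrable_of_ae_bound hFm.aestronglyMeasurable hFb
  -- the averaged kernel Kf
  set Kf : (Fin n → EuclideanSpace ℝ (Fin d)) → ℝ :=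
    fun v => ∫ ξ, kantorovich (Obs.emp (fun i => v i + ε • ξ i)) μ ∂ν with hKfdef
  have hjoint : Continuous (fun w : (Fin n → EuclideanSpace ℝ (Fin d)) ×
      (Fin n → EuclideanSpace ℝ (Fin d)) =>
      kantorovich (Obs.emp (fun i => w.2 i + ε • w.1 i)) μ) := by
    refine hΦcont.comp ?_
    exact continuous_pi fun i => (((continuous_apply i).comp continuous_snd).add
      (((continuous_apply i).comp continuous_fst).const_smul ε))
  have hKfsm : StronglyMeasurable Kf := hjoint.stronglyMeasurable.integral_prod_left'
  have hKslice_m : ∀ v : Fin n → EuclideanSpace ℝ (Fin d),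
      Measurable (fun ξ : Fin n → EuclideanSpace ℝ (Fin d) =>
        kantorovich (Obs.emp (fun i => v i + ε • ξ i)) μ) := by
    intro v
    exact (hjoint.comp (Continuous.prodMk_left v)).measurable
  have hKslice : ∀ v : Fin n → EuclideanSpace ℝ (Fin d),
      Integrable (fun ξ => kantorovich (Obs.emp (fun i => v i + ε • ξ i)) μ) ν := by
    intro v
    refine Obs.integrable_of_ae_bound (B := (n:ℝ)⁻¹ * (∑ i, ‖v i‖) + ε + R)
      (hKslice_m v).aestronglyMeasurable ?_
    filter_upwards [hξae] with ξ hξ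
    rw [abs_of_nonneg (hΦ0 _)]
    exact hΦv_le v ξ hξ
  have hKb : ∀ v : Fin n → EuclideanSpace ℝ (Fin d),
      |Kf v| ≤ (n:ℝ)⁻¹ * (∑ i, ‖v i‖) + ε + R := by
    intro v
    rw [hKfdef]
    calc |∫ ξ, kantorovich (Obs.emp (fun i => v i + ε • ξ i)) μ ∂ν|
        ≤ ∫ ξ, |kantorovich (Obs.emp (fun i => v i + ε • ξ i)) μ| ∂ν := by
          simpa [Real.norm_eq_abs] using norm_integral_le_integral_norm
            (fun ξ : Fin n → EuclideanSpace ℝ (Fin d) =>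
              kantorovich (Obs.emp (fun i => v i + ε • ξ i)) μ)
      _ ≤ ∫ _ξ, ((n:ℝ)⁻¹ * (∑ i, ‖v i‖) + ε + R) ∂ν := by
          refine integral_mono_ae (hKslice v).abs (integrable_const _) ?_
          filter_upwards [hξae] with ξ hξ
          rw [abs_of_nonneg (hΦ0 _)]
          exact hΦv_le v ξ hξ
      _ = (n:ℝ)⁻¹ * (∑ i, ‖v i‖) + ε + R := by
          rw [integral_const, probReal_univ, one_smul]
  -- SepLip for Kf
  have hupdate : ∀ (v ξ : Fin n → EuclideanSpace ℝ (Fin d)) (j : Fin n)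
      (w : EuclideanSpace ℝ (Fin d)),
      (fun i => Function.update v j w i + ε • ξ i)
        = Function.update (fun i => v i + ε • ξ i) j (w + ε • ξ j) := by
    intro v ξ j w
    funext i
    rcases eq_or_ne i j with h | h
    · subst h
      rw [Function.update_self, Function.update_self]
    · rw [Function.update_of_ne h, Function.update_of_ne h]
  have hKsep : SepLip Kf (fun _ => (n:ℝ)⁻¹) := by
    intro v j w
    have hpt : ∀ ξ : Fin n → EuclideanSpace ℝ (Fin d),
        |kantorovich (Obs.emp (fun i => v i + ε • ξ i)) μ
          - kantorovich (Obs.emp (fun i => Function.update v j w i + ε • ξ i)) μ|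
          ≤ (n:ℝ)⁻¹ * dist (v j) w := by
      intro ξ
      rw [hupdate v ξ j w]
      have h := Obs.kant_seplip hn (fun i => v i + ε • ξ i) j (w + ε • ξ j) hRμ
      have hd : dist (v j + ε • ξ j) (w + ε • ξ j) = dist (v j) w := dist_add_right _ _ _
      rwa [hd] at h
    have hsub : Kf v - Kf (Function.update v j w)
        = ∫ ξ, (kantorovich (Obs.emp (fun i => v i + ε • ξ i)) μ
            - kantorovich (Obs.emp (fun i => Function.update v j w i + ε • ξ i)) μ) ∂ν :=
      (integral_sub (hKslice v) (hKslice _)).symm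
    rw [hsub]
    calc |∫ ξ, (kantorovich (Obs.emp (fun i => v i + ε • ξ i)) μ
            - kantorovich (Obs.emp (fun i => Function.update v j w i + ε • ξ i)) μ) ∂ν|
        ≤ ∫ ξ, |kantorovich (Obs.emp (fun i => v i + ε • ξ i)) μ
            - kantorovich (Obs.emp (fun i => Function.update v j w i + ε • ξ i)) μ| ∂ν := by
          simpa [Real.norm_eq_abs] using norm_integral_le_integral_norm
            (fun ξ : Fin n → EuclideanSpace ℝ (Fin d) =>
              kantorovich (Obs.emp (fun i => v i + ε • ξ i)) μ
              - kantorovich (Obs.emp (fun i => Function.update v j w i + ε • ξ i)) μ)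
      _ ≤ ∫ _ξ, (n:ℝ)⁻¹ * dist (v j) w ∂ν :=
          integral_mono ((hKslice v).sub (hKslice _)).abs (integrable_const _) hpt
      _ = (n:ℝ)⁻¹ * dist (v j) w := by
          rw [integral_const, probReal_univ, one_smul]
  have hrpow_m : Measurable (fun x : ℝ => x ^ q) :=
    (Real.continuous_rpow_const hq0.le).measurable
  -- T2 constants
  have hsumL : (∑ _j : Fin n, ((n:ℝ)⁻¹)^2) = (n:ℝ)⁻¹ := by
    rw [Finset.sum_const, Finset.card_univ, Fintype.card_fin, nsmul_eq_mul]
    field_simp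
  have hinvq : ((n:ℝ)⁻¹) ^ (q/2) = (n:ℝ) ^ (-(q/2)) := by
    rw [Real.inv_rpow hnpos.le, ← Real.rpow_neg hnpos.le]
  have hconcK := hconc n hn Kf (fun _ => (n:ℝ)⁻¹) hKsep
  rw [hsumL, hinvq] at hconcK
  -- Fubini for m
  have hFint' : Integrable (fun p => kantorovich (obsEmpirical T ε p) μ) (μ.prod ν) := by
    rw [← hρdef]; exact hFint
  have hm_eq : m = ∫ x, Kf (fun i => T^[(i:ℕ)] x) ∂μ := by
    rw [hmdef, hρdef, integral_prod _ hFint']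
    rfl
  -- inner moment bound
  have hinner : ∀ x : EuclideanSpace ℝ (Fin d),
      ∫ ξ, |kantorovich (obsEmpirical T ε (x, ξ)) μ - Kf (fun i => T^[(i:ℕ)] x)| ^ q ∂ν
        ≤ A * ε^q * (n:ℝ)^(-(q/2)) := by
    intro x
    set v : Fin n → EuclideanSpace ℝ (Fin d) := fun i => T^[(i:ℕ)] x with hvdef
    set Gx : (Fin n → EuclideanSpace ℝ (Fin d)) → ℝ :=
      fun ξ => kantorovich (Obs.emp (fun i => v i + ε • ξ i)) μ with hGxdef
    have hGxm : Measurable Gx := hKslice_m v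
    have hGxsep : ∀ (ξ : Fin n → EuclideanSpace ℝ (Fin d)) (j : Fin n) w,
        |Gx ξ - Gx (Function.update ξ j w)| ≤ (ε * (n:ℝ)⁻¹) * dist (ξ j) w := by
      intro ξ j w
      have hupd2 : (fun i => v i + ε • Function.update ξ j w i)
          = Function.update (fun i => v i + ε • ξ i) j (v j + ε • w) := by
        funext i
        rcases eq_or_ne i j with h | h
        · subst h; rw [Function.update_self, Function.update_self]
        · rw [Function.update_of_ne h, Function.update_of_ne h]
      have hGx2 : Gx (Function.update ξ j w)
          = kantorovich (Obs.emp (Function.update (fun i => v i + ε • ξ i) j (v j + ε • w))) μ := by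
        rw [hGxdef]
        simp only
        rw [hupd2]
      rw [hGx2, hGxdef]
      simp only
      have h := Obs.kant_seplip hn (fun i => v i + ε • ξ i) j (v j + ε • w) hRμ
      have hd : dist ((fun i => v i + ε • ξ i) j) (v j + ε • w) = ε * dist (ξ j) w := by
        simp only
        rw [dist_add_left, dist_smul₀, Real.norm_eq_abs, abs_of_pos hε]
      rw [hd] at h
      calc |kantorovich (Obs.emp fun i => v i + ε • ξ i) μ
          - kantorovich (Obs.emp (Function.update (fun i => v i + ε • ξ i) j (v j + ε • w))) μ|
          ≤ (n:ℝ)⁻¹ * (ε * dist (ξ j) w) := h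
        _ = (ε * (n:ℝ)⁻¹) * dist (ξ j) w := by ring
    have hmz := Obs.mz (P := P) hS1m hPS1 hS1d
      (c := ε * (n:ℝ)⁻¹) (by positivity) k n Gx hGxm hGxsep k le_rfl
    rw [← hνdef] at hmz
    have hmean : (∫ η, Gx η ∂ν) = Kf v := rfl
    rw [hmean] at hmz
    set β : ℝ := ((8:ℝ)^k * ((n:ℝ) * (2*(ε * (n:ℝ)⁻¹))^2))^k with hβdef
    have hβ0 : 0 < β := by rw [hβdef]; positivity
    have hBv : (0:ℝ) ≤ 2*((n:ℝ)⁻¹ * (∑ i, ‖v i‖) + ε + R) := by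
      have : (0:ℝ) ≤ (n:ℝ)⁻¹ * (∑ i, ‖v i‖) := by positivity
      linarith
    have hWb : ∀ᵐ ξ ∂ν, |Gx ξ - Kf v| ≤ 2*((n:ℝ)⁻¹ * (∑ i, ‖v i‖) + ε + R) := by
      filter_upwards [hξae] with ξ hξ
      have h1 : |Gx ξ| ≤ (n:ℝ)⁻¹ * (∑ i, ‖v i‖) + ε + R := by
        rw [hGxdef]
        simp only
        rw [abs_of_nonneg (hΦ0 _)]
        exact hΦv_le v ξ hξ
      have h2 := hKb v
      calc |Gx ξ - Kf v| ≤ |Gx ξ| + |Kf v| := abs_sub _ _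
        _ ≤ 2*((n:ℝ)⁻¹ * (∑ i, ‖v i‖) + ε + R) := by linarith
    have hWm : Measurable (fun ξ => |Gx ξ - Kf v|) := (hGxm.sub measurable_const).abs
    have hiq : Integrable (fun ξ => |Gx ξ - Kf v| ^ q) ν := by
      refine Obs.integrable_of_ae_bound (B := (2*((n:ℝ)⁻¹ * (∑ i, ‖v i‖) + ε + R))^q)
        (hrpow_m.comp hWm).aestronglyMeasurable ?_
      filter_upwards [hWb] with ξ h
      rw [abs_of_nonneg (Real.rpow_nonneg (abs_nonneg _) q)]
      exact Real.rpow_le_rpow (abs_nonneg _) h hq0.le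
    have hik : Integrable (fun ξ => |Gx ξ - Kf v| ^ (2*k)) ν := by
      refine Obs.integrable_of_ae_bound (B := (2*((n:ℝ)⁻¹ * (∑ i, ‖v i‖) + ε + R))^(2*k))
        (hWm.pow_const (2*k)).aestronglyMeasurable ?_
      filter_upwards [hWb] with ξ h
      rw [abs_pow, abs_abs]
      exact pow_le_pow_left₀ (abs_nonneg _) h (2*k)
    have hmom := Obs.moment_interp (W := fun ξ => |Gx ξ - Kf v|)
      (fun ξ => abs_nonneg _) hq0 hq2k hβ0 hmz hiq hik
    have hconst : 2 * β ^ (q/(2*(k:ℝ))) = A * ε^q * (n:ℝ)^(-(q/2)) := by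
      have hx0 : (0:ℝ) < (8:ℝ)^k * 4 * (ε^2 * (n:ℝ)⁻¹) := by positivity
      have hbase : (8:ℝ)^k * ((n:ℝ) * (2*(ε * (n:ℝ)⁻¹))^2) = (8:ℝ)^k * 4 * (ε^2 * (n:ℝ)⁻¹) := by
        field_simp
        ring
      have e1 : β ^ (q/(2*(k:ℝ))) = ((8:ℝ)^k * 4 * (ε^2 * (n:ℝ)⁻¹)) ^ (q/2) := by
        rw [hβdef, hbase, ← Real.rpow_natCast ((8:ℝ)^k * 4 * (ε^2 * (n:ℝ)⁻¹)) k,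
          ← Real.rpow_mul hx0.le]
        congr 1
        have hkne : (k:ℝ) ≠ 0 := Nat.cast_ne_zero.2 (by omega)
        field_simp
      have e2 : ((8:ℝ)^k * 4 * (ε^2 * (n:ℝ)⁻¹)) ^ (q/2)
          = ((8:ℝ)^k * 4) ^ (q/2) * ((ε^2:ℝ) ^ (q/2) * ((n:ℝ)⁻¹) ^ (q/2)) := by
        rw [Real.mul_rpow (by positivity) (by positivity)]
        congr 1
        exact Real.mul_rpow (by positivity) (by positivity)
      have e3 : (ε^2 : ℝ) ^ (q/2) = ε ^ q := by
        rw [← Real.rpow_natCast ε 2, ← Real.rpow_mul hε.le]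
        congr 1
        push_cast
        ring
      rw [e1, e2, e3, hinvq, hAdef]
      ring
    have hfinn : (fun ξ => |kantorovich (obsEmpirical T ε (x, ξ)) μ
        - Kf (fun i => T^[(i:ℕ)] x)| ^ q) = fun ξ => |Gx ξ - Kf v| ^ q := rfl
    rw [hfinn]
    rw [← hconst]
    exact hmom
  -- bound for Kf along trajectories
  have hKtraj_ae : ∀ᵐ p ∂ρ, |Kf (fun i => T^[(i:ℕ)] p.1)| ≤ 2*R + ε := by
    filter_upwards [haeρ] with p hp
    have h2 : (∑ i : Fin n, ‖T^[(i:ℕ)] p.1‖) ≤ (n:ℝ) * R := by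
      calc (∑ i : Fin n, ‖T^[(i:ℕ)] p.1‖) ≤ ∑ _i : Fin n, R :=
            Finset.sum_le_sum fun i _ => hnormX _ (hp.1 i)
        _ = (n:ℝ) * R := by
            rw [Finset.sum_const, Finset.card_univ, Fintype.card_fin, nsmul_eq_mul]
    have h1 := hKb (fun i => T^[(i:ℕ)] p.1)
    have h3 : (n:ℝ)⁻¹ * (∑ i : Fin n, ‖T^[(i:ℕ)] p.1‖) ≤ R := by
      calc (n:ℝ)⁻¹ * (∑ i : Fin n, ‖T^[(i:ℕ)] p.1‖) ≤ (n:ℝ)⁻¹ * ((n:ℝ) * R) :=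
            mul_le_mul_of_nonneg_left h2 (by positivity)
        _ = R := by field_simp
    linarith
  have hKtrajm : Measurable (fun p : EuclideanSpace ℝ (Fin d) ×
      (Fin n → EuclideanSpace ℝ (Fin d)) => Kf (fun i => T^[(i:ℕ)] p.1)) :=
    hKfsm.measurable.comp (htraj.comp measurable_fst)
  -- T1
  have hZ1m : Measurable (fun p : EuclideanSpace ℝ (Fin d) ×
      (Fin n → EuclideanSpace ℝ (Fin d)) =>
      |kantorovich (obsEmpirical T ε p) μ - Kf (fun i => T^[(i:ℕ)] p.1)| ^ q) :=
    hrpow_m.comp (hFm.sub hKtrajm).abs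
  have hZ1int : Integrable (fun p =>
      |kantorovich (obsEmpirical T ε p) μ - Kf (fun i => T^[(i:ℕ)] p.1)| ^ q) ρ := by
    refine Obs.integrable_of_ae_bound (B := (2*(2*R + ε))^q) hZ1m.aestronglyMeasurable ?_
    filter_upwards [hFb, hKtraj_ae] with p h1 h2
    rw [abs_of_nonneg (Real.rpow_nonneg (abs_nonneg _) q)]
    refine Real.rpow_le_rpow (abs_nonneg _) ?_ hq0.le
    calc |kantorovich (obsEmpirical T ε p) μ - Kf (fun i => T^[(i:ℕ)] p.1)|
        ≤ |kantorovich (obsEmpirical T ε p) μ| + |Kf (fun i => T^[(i:ℕ)] p.1)| := abs_sub _ _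
      _ ≤ 2*(2*R + ε) := by linarith
  have hZ1int' : Integrable (fun p =>
      |kantorovich (obsEmpirical T ε p) μ - Kf (fun i => T^[(i:ℕ)] p.1)| ^ q) (μ.prod ν) := by
    rw [← hρdef]; exact hZ1int
  have hT1 : ∫ p, |kantorovich (obsEmpirical T ε p) μ
      - Kf (fun i => T^[(i:ℕ)] p.1)| ^ q ∂ρ ≤ A * ε^q * (n:ℝ)^(-(q/2)) := by
    rw [hρdef, integral_prod _ hZ1int']
    calc ∫ x, (∫ ξ, |kantorovich (obsEmpirical T ε (x, ξ)) μ
          - Kf (fun i => T^[(i:ℕ)] x)| ^ q ∂ν) ∂μ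
        ≤ ∫ _x, (A * ε^q * (n:ℝ)^(-(q/2))) ∂μ := by
          refine integral_mono (hZ1int'.integral_prod_left) (integrable_const _) ?_
          exact fun x => hinner x
      _ = A * ε^q * (n:ℝ)^(-(q/2)) := by
          rw [integral_const, probReal_univ, one_smul]
  -- T2
  have hZ2m : Measurable (fun p : EuclideanSpace ℝ (Fin d) ×
      (Fin n → EuclideanSpace ℝ (Fin d)) =>
      |Kf (fun i => T^[(i:ℕ)] p.1) - m| ^ q) :=
    hrpow_m.comp (hKtrajm.sub measurable_const).abs
  have hZ2int : Integrable (fun p => |Kf (fun i => T^[(i:ℕ)] p.1) - m| ^ q) ρ := by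
    refine Obs.integrable_of_ae_bound (B := (2*R + ε + |m|)^q) hZ2m.aestronglyMeasurable ?_
    filter_upwards [hKtraj_ae] with p h2
    rw [abs_of_nonneg (Real.rpow_nonneg (abs_nonneg _) q)]
    refine Real.rpow_le_rpow (abs_nonneg _) ?_ hq0.le
    calc |Kf (fun i => T^[(i:ℕ)] p.1) - m|
        ≤ |Kf (fun i => T^[(i:ℕ)] p.1)| + |m| := abs_sub _ _
      _ ≤ 2*R + ε + |m| := by linarith
  have hZ2int' : Integrable (fun p => |Kf (fun i => T^[(i:ℕ)] p.1) - m| ^ q) (μ.prod ν) := by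
    rw [← hρdef]; exact hZ2int
  have hT2 : ∫ p, |Kf (fun i => T^[(i:ℕ)] p.1) - m| ^ q ∂ρ ≤ Cq * (n:ℝ)^(-(q/2)) := by
    have heq : ∫ p, |Kf (fun i => T^[(i:ℕ)] p.1) - m| ^ q ∂ρ
        = ∫ x, |Kf (fun i => T^[(i:ℕ)] x) - m| ^ q ∂μ := by
      rw [hρdef, integral_prod _ hZ2int']
      congr 1
      funext x
      show (∫ (_ξ : Fin n → EuclideanSpace ℝ (Fin d)),
        |Kf (fun i => T^[(i:ℕ)] x) - m| ^ q ∂ν) = |Kf (fun i => T^[(i:ℕ)] x) - m| ^ q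
      rw [integral_const, probReal_univ, one_smul]
    rw [heq, hm_eq]
    exact hconcK
  -- split the q-th moment
  have hZqm : Measurable (fun p : EuclideanSpace ℝ (Fin d) ×
      (Fin n → EuclideanSpace ℝ (Fin d)) =>
      |kantorovich (obsEmpirical T ε p) μ - m| ^ q) :=
    hrpow_m.comp (hFm.sub measurable_const).abs
  have hZqint : Integrable (fun p => |kantorovich (obsEmpirical T ε p) μ - m| ^ q) ρ := by
    refine Obs.integrable_of_ae_bound (B := (2*R + ε + |m|)^q) hZqm.aestronglyMeasurable ?_
    filter_upwards [hFb] with p h1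
    rw [abs_of_nonneg (Real.rpow_nonneg (abs_nonneg _) q)]
    refine Real.rpow_le_rpow (abs_nonneg _) ?_ hq0.le
    calc |kantorovich (obsEmpirical T ε p) μ - m|
        ≤ |kantorovich (obsEmpirical T ε p) μ| + |m| := abs_sub _ _
      _ ≤ 2*R + ε + |m| := by linarith
  have hsplitpt : ∀ p : EuclideanSpace ℝ (Fin d) × (Fin n → EuclideanSpace ℝ (Fin d)),
      |kantorovich (obsEmpirical T ε p) μ - m| ^ q
      ≤ 2^(q-1) * (|kantorovich (obsEmpirical T ε p) μ - Kf (fun i => T^[(i:ℕ)] p.1)| ^ q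
          + |Kf (fun i => T^[(i:ℕ)] p.1) - m| ^ q) := by
    intro p
    have htri : |kantorovich (obsEmpirical T ε p) μ - m|
        ≤ |kantorovich (obsEmpirical T ε p) μ - Kf (fun i => T^[(i:ℕ)] p.1)|
          + |Kf (fun i => T^[(i:ℕ)] p.1) - m| := abs_sub_le _ _ _
    have h1 : |kantorovich (obsEmpirical T ε p) μ - m| ^ q
        ≤ (|kantorovich (obsEmpirical T ε p) μ - Kf (fun i => T^[(i:ℕ)] p.1)|
          + |Kf (fun i => T^[(i:ℕ)] p.1) - m|) ^ q :=
      Real.rpow_le_rpow (abs_nonneg _) htri hq0.le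
    have h2 := Obs.rpow_add_le_two_rpow
      (abs_nonneg (kantorovich (obsEmpirical T ε p) μ - Kf (fun i => T^[(i:ℕ)] p.1)))
      (abs_nonneg (Kf (fun i => T^[(i:ℕ)] p.1) - m)) (by linarith : 1 ≤ q)
    linarith
  have h2q : (0:ℝ) ≤ 2^(q-1) := Real.rpow_nonneg (by norm_num) _
  have hnq : 0 ≤ (n:ℝ)^(-(q/2)) := Real.rpow_nonneg hnpos.le _
  have htotal : ∫ p, |kantorovich (obsEmpirical T ε p) μ - m| ^ q ∂ρ
      ≤ 2^(q-1) * (A*ε^q*(n:ℝ)^(-(q/2)) + Cq*(n:ℝ)^(-(q/2))) := by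
    calc ∫ p, |kantorovich (obsEmpirical T ε p) μ - m| ^ q ∂ρ
        ≤ ∫ p, 2^(q-1) * (|kantorovich (obsEmpirical T ε p) μ
            - Kf (fun i => T^[(i:ℕ)] p.1)| ^ q
            + |Kf (fun i => T^[(i:ℕ)] p.1) - m| ^ q) ∂ρ :=
          integral_mono hZqint ((hZ1int.add hZ2int).const_mul _) hsplitpt
      _ = 2^(q-1) * ((∫ p, |kantorovich (obsEmpirical T ε p) μ
            - Kf (fun i => T^[(i:ℕ)] p.1)| ^ q ∂ρ)
            + ∫ p, |Kf (fun i => T^[(i:ℕ)] p.1) - m| ^ q ∂ρ) := by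
          rw [integral_const_mul, integral_add hZ1int hZ2int]
      _ ≤ 2^(q-1) * (A*ε^q*(n:ℝ)^(-(q/2)) + Cq*(n:ℝ)^(-(q/2))) := by
          refine mul_le_mul_of_nonneg_left (add_le_add hT1 hT2) h2q
  -- Chebyshev
  have hAs : MeasurableSet {p : EuclideanSpace ℝ (Fin d) × (Fin n → EuclideanSpace ℝ (Fin d)) |
      t + m < kantorovich (obsEmpirical T ε p) μ} :=
    measurableSet_lt measurable_const hFm
  have hq_t : ∀ p ∈ {p : EuclideanSpace ℝ (Fin d) × (Fin n → EuclideanSpace ℝ (Fin d)) |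
      t + m < kantorovich (obsEmpirical T ε p) μ},
      t^q ≤ |kantorovich (obsEmpirical T ε p) μ - m| ^ q := by
    intro p hp
    simp only [Set.mem_setOf_eq] at hp
    have h1 : t ≤ |kantorovich (obsEmpirical T ε p) μ - m| := by
      have h2 : t ≤ kantorovich (obsEmpirical T ε p) μ - m := by linarith
      exact h2.trans (le_abs_self _)
    exact Real.rpow_le_rpow ht.le h1 hq0.le
  have hcheb : t^q * (ρ {p | t + m < kantorovich (obsEmpirical T ε p) μ}).toReal
      ≤ ∫ p, |kantorovich (obsEmpirical T ε p) μ - m| ^ q ∂ρ := by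
    refine le_trans (le_of_eq (by rw [smul_eq_mul, mul_comm]; rfl)) (le_trans (setIntegral_ge_of_const_le hAs (measure_ne_top _ _) hq_t
      hZqint.integrableOn) ?_)
    exact setIntegral_le_integral hZqint
      (Filter.Eventually.of_forall fun p => Real.rpow_nonneg (abs_nonneg _) q)
  -- final assembly
  have htq : 0 < t^q := Real.rpow_pos_of_pos ht q
  have hεq : ε^q ≤ (1+ε)^q := Real.rpow_le_rpow hε.le (by linarith) hq0.le
  have h1εq : 1 ≤ (1+ε)^q := by
    calc (1:ℝ) = 1 ^ q := (Real.one_rpow q).symm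
      _ ≤ (1+ε)^q := Real.rpow_le_rpow zero_le_one (by linarith) hq0.le
  have hfinal : ∫ p, |kantorovich (obsEmpirical T ε p) μ - m| ^ q ∂ρ
      ≤ ((2:ℝ)^(q-1) * (A + Cq)) * (1+ε)^q * (n:ℝ)^(-(q/2)) := by
    refine htotal.trans ?_
    have hcoef : A*ε^q + Cq ≤ (A + Cq) * (1+ε)^q := by nlinarith [hA0.le, hCq.le]
    calc 2^(q-1) * (A*ε^q*(n:ℝ)^(-(q/2)) + Cq*(n:ℝ)^(-(q/2)))
        = 2^(q-1) * (A*ε^q + Cq) * (n:ℝ)^(-(q/2)) := by ring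
      _ ≤ 2^(q-1) * ((A + Cq)*(1+ε)^q) * (n:ℝ)^(-(q/2)) := by
          refine mul_le_mul_of_nonneg_right (mul_le_mul_of_nonneg_left hcoef h2q) hnq
      _ = ((2:ℝ)^(q-1) * (A + Cq)) * (1+ε)^q * (n:ℝ)^(-(q/2)) := by ring
  rw [div_mul_eq_mul_div, le_div_iff₀ htq]
  have hchain : (ρ {p | t + m < kantorovich (obsEmpirical T ε p) μ}).toReal * t^q
      ≤ ((2:ℝ)^(q-1) * (A + Cq)) * (1+ε)^q * (n:ℝ)^(-(q/2)) := by
    calc (ρ {p | t + m < kantorovich (obsEmpirical T ε p) μ}).toReal * t^q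
        = t^q * (ρ {p | t + m < kantorovich (obsEmpirical T ε p) μ}).toReal := by ring
      _ ≤ ∫ p, |kantorovich (obsEmpirical T ε p) μ - m| ^ q ∂ρ := hcheb
      _ ≤ ((2:ℝ)^(q-1) * (A + Cq)) * (1+ε)^q * (n:ℝ)^(-(q/2)) := hfinal
  refine hchain.trans_eq ?_
  ring



end Main
end
end
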